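/- arXiv:2401.08153 — 8 statements merged into one kernel-verified Lean document; each statement's English description precedes it below -/
import Mathlib

section
/- Let f : ℝⁿ → ℝⁿ and φ : ℝⁿ → ℝᴺ with N ≥ n be C¹ maps. Assume (D1) there exists a Schur stable matrix A ∈ ℝ^{N×N} such that φ(f(x)) = A φ(x) for all x ∈ ℝⁿ, and (D2) the Jacobian matrix Dφ(x) ∈ ℝ^{N×n} has full column rank n for every x and there are constants a₂ ≥ a₁ > 0 with a₁ I ≼ Dφ(x)ᵀ Dφ(x) ≼ a₂ I for all x. Then there exist a symmetric positive definite matrix P ∈ ℝ^{N×N} and a constant β ∈ (0,1) such that, setting M(x) := Dφ(x)ᵀ P Dφ(x), the inequality Df(x)ᵀ M(f(x)) Df(x) − M(x) ≼ −β M(x) holds for all x ∈ ℝⁿ; i.e., the system x_{t+1} = f(x_t) is contracting with metric M. -/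
open Matrix
open scoped Matrix.Norms.L2Operator ENNReal NNReal

open Matrix
open scoped Matrix.Norms.L2Operator ENNReal NNReal

private lemma sum_mulVec' {N : ℕ} {k : ℕ} (f : ℕ → Matrix (Fin N) (Fin N) ℝ) (v : Fin N → ℝ) :
    (∑ j ∈ Finset.range k, f j) *ᵥ v = ∑ j ∈ Finset.range k, (f j *ᵥ v) := by
  ext i
  simp [Matrix.mulVec, dotProduct, Finset.sum_mul, Matrix.sum_apply]
  rw [Finset.sum_comm]

private lemma quad_bound {N : ℕ} (B : Matrix (Fin N) (Fin N) ℝ) (ρ : ℝ)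
    (hρ : ‖B.map Complex.ofReal‖ ≤ ρ) (v : Fin N → ℝ) :
    (B *ᵥ v) ⬝ᵥ (B *ᵥ v) ≤ ρ ^ 2 * (v ⬝ᵥ v) := by
  set Bc := B.map Complex.ofReal
  set w : EuclideanSpace ℂ (Fin N) := (WithLp.equiv 2 _).symm (fun i => (v i : ℂ)) with hw
  have hρ0 : 0 ≤ ρ := le_trans (norm_nonneg _) hρ
  have h1 : ‖(EuclideanSpace.equiv (Fin N) ℂ).symm <| Bc *ᵥ w‖ ≤ ρ * ‖w‖ :=
    le_trans (Bc.l2_opNorm_mulVec w) (by gcongr)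
  have hnw : ‖w‖ ^ 2 = v ⬝ᵥ v := by
    rw [EuclideanSpace.norm_eq, Real.sq_sqrt (by positivity)]
    simp [hw, dotProduct, Complex.norm_real, Real.norm_eq_abs, sq_abs, sq]
  have hmv : ∀ i, (Bc *ᵥ (fun j => ((v j : ℂ)))) i = ((B *ᵥ v) i : ℂ) := by
    intro i
    simp [Bc, Matrix.mulVec, dotProduct, Matrix.map_apply]
  have hn1 : ‖(EuclideanSpace.equiv (Fin N) ℂ).symm <| Bc *ᵥ w‖ ^ 2 = (B *ᵥ v) ⬝ᵥ (B *ᵥ v) := by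
    rw [EuclideanSpace.norm_eq, Real.sq_sqrt (by positivity)]
    simp only [EuclideanSpace.equiv, Homeomorph.symm, dotProduct]
    congr 1
    ext i
    show ‖(Bc *ᵥ w) i‖ ^ 2 = _
    have h2 : ∀ i, (Bc *ᵥ w) i = ((B *ᵥ v) i : ℂ) := hmv
    rw [h2 i]
    simp [Complex.norm_real, Real.norm_eq_abs, sq_abs, sq]
  calc (B *ᵥ v) ⬝ᵥ (B *ᵥ v) = ‖(EuclideanSpace.equiv (Fin N) ℂ).symm <| Bc *ᵥ w‖ ^ 2 := hn1.symm
    _ ≤ (ρ * ‖w‖) ^ 2 := by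
        apply sq_le_sq' _ h1
        nlinarith [norm_nonneg ((EuclideanSpace.equiv (Fin N) ℂ).symm <| Bc *ᵥ w), norm_nonneg w,
          mul_nonneg hρ0 (norm_nonneg w)]
    _ = ρ ^ 2 * (v ⬝ᵥ v) := by rw [mul_pow, hnw]

private lemma schur_pow_small {N : ℕ} (A : Matrix (Fin N) (Fin N) ℝ)
    (hA : ∀ μ ∈ spectrum ℂ (A.map Complex.ofReal), ‖μ‖ < 1) :
    ∃ k : ℕ, 1 ≤ k ∧ ‖(A.map Complex.ofReal) ^ k‖ < 1 := by
  set Ac := A.map Complex.ofReal with hAc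
  have hrad : spectralRadius ℂ Ac < 1 := by
    rcases Nat.eq_zero_or_pos N with h | h
    · subst h
      have hs : Subsingleton (Matrix (Fin 0) (Fin 0) ℂ) := by
        constructor; intro a b; ext i j; exact absurd i.2 (by omega)
      rw [spectrum.SpectralRadius.of_subsingleton]
      norm_num
    · have : Nontrivial (Matrix (Fin N) (Fin N) ℂ) := by
        haveI : NeZero N := ⟨h.ne'⟩
        infer_instance
      obtain ⟨k₀, hk₀, hk₀eq⟩ := spectrum.exists_nnnorm_eq_spectralRadius_of_nonempty
        (spectrum.nonempty Ac)
      rw [← hk₀eq]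
      have h1 : ‖k₀‖₊ < (1 : NNReal) := by
        have := hA k₀ hk₀
        exact_mod_cast this
      exact_mod_cast h1
  have hgel := spectrum.pow_nnnorm_pow_one_div_tendsto_nhds_spectralRadius Ac
  have hev : ∀ᶠ m : ℕ in Filter.atTop,
      (‖Ac ^ m‖₊ : ℝ≥0∞) ^ (1 / (m:ℝ)) < 1 :=
    hgel.eventually_lt_const hrad
  obtain ⟨k, hk1, hk⟩ := (hev.and (Filter.eventually_ge_atTop 1)).exists
  refine ⟨k, hk, ?_⟩
  have hkpos : (0:ℝ) < 1 / (k:ℝ) := by positivity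
  have h2 : (‖Ac ^ k‖₊ : ℝ≥0∞) < 1 := by
    rw [← ENNReal.one_rpow (1 / (k:ℝ))] at hk1
    exact (ENNReal.rpow_lt_rpow_iff hkpos).mp hk1
  have h3 : ‖Ac ^ k‖₊ < 1 := by exact_mod_cast h2
  exact_mod_cast h3

private lemma dotProduct_sum' {N : ℕ} {k : ℕ} (v : Fin N → ℝ) (u : ℕ → (Fin N → ℝ)) :
    v ⬝ᵥ (∑ j ∈ Finset.range k, u j) = ∑ j ∈ Finset.range k, v ⬝ᵥ u j := by
  simp [dotProduct, Finset.mul_sum, Finset.sum_apply]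
  rw [Finset.sum_comm]

private lemma lyap {N : ℕ} (A : Matrix (Fin N) (Fin N) ℝ)
    (hA : ∀ μ ∈ spectrum ℂ (A.map Complex.ofReal), ‖μ‖ < 1) :
    ∃ (P : Matrix (Fin N) (Fin N) ℝ) (β : ℝ), P.PosDef ∧ 0 < β ∧ β < 1 ∧
      ((1 - β) • P - Aᵀ * P * A).PosSemidef := by
  obtain ⟨k, hk1, hknorm⟩ := schur_pow_small A hA
  have hmap : ∀ j : ℕ, (A.map Complex.ofReal) ^ j = (A ^ j).map Complex.ofReal := by
    intro j
    have h0 : A.map Complex.ofReal = Complex.ofRealHom.mapMatrix A := rfl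
    rw [h0, ← map_pow]
    rfl
  set ρj : ℕ → ℝ := fun j => ‖(A.map Complex.ofReal) ^ j‖ with hρj
  have key : ∀ (j : ℕ) (v : Fin N → ℝ),
      ((A ^ j) *ᵥ v) ⬝ᵥ ((A ^ j) *ᵥ v) ≤ (ρj j) ^ 2 * (v ⬝ᵥ v) := by
    intro j v
    exact quad_bound (A ^ j) (ρj j) (le_of_eq ((congrArg norm (hmap j)).symm)) v
  set ρ := ρj k with hρdef
  have hρ1 : ρ < 1 := hknorm
  have hρ0 : 0 ≤ ρ := norm_nonneg _
  set P : Matrix (Fin N) (Fin N) ℝ := ∑ j ∈ Finset.range k, (A ^ j)ᵀ * (A ^ j) with hP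
  set c : ℝ := ∑ j ∈ Finset.range k, (ρj j) ^ 2 with hc
  have hc0 : 0 ≤ c := Finset.sum_nonneg fun j _ => sq_nonneg _
  set β : ℝ := (1 - ρ ^ 2) / (c + 2) with hβ
  have hρsq : ρ ^ 2 < 1 := by nlinarith
  have hβpos : 0 < β := by apply div_pos; nlinarith; linarith
  have hβlt : β < 1 := by
    rw [hβ, div_lt_one (by linarith)]
    nlinarith
  have hβc : β * (c + 2) = 1 - ρ ^ 2 := by
    rw [hβ]; field_simp
  -- quadratic form of P
  have hq : ∀ v : Fin N → ℝ, v ⬝ᵥ (P *ᵥ v)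
      = ∑ j ∈ Finset.range k, ((A ^ j) *ᵥ v) ⬝ᵥ ((A ^ j) *ᵥ v) := by
    intro v
    rw [hP, sum_mulVec']
    rw [dotProduct_sum']
    apply Finset.sum_congr rfl
    intro j _
    rw [← Matrix.mulVec_mulVec, Matrix.dotProduct_mulVec, Matrix.vecMul_transpose]
  have dnn : ∀ u : Fin N → ℝ, 0 ≤ u ⬝ᵥ u := fun u =>
    Finset.sum_nonneg fun i _ => mul_self_nonneg _
  have hherm : P.IsHermitian := by
    rw [hP, Matrix.IsHermitian]
    rw [conjTranspose_sum]
    apply Finset.sum_congr rfl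
    intro j _
    exact (Matrix.posSemidef_conjTranspose_mul_self (A ^ j)).1
  have hub : ∀ v : Fin N → ℝ, v ⬝ᵥ (P *ᵥ v) ≤ c * (v ⬝ᵥ v) := by
    intro v
    rw [hq, hc, Finset.sum_mul]
    exact Finset.sum_le_sum fun j _ => key j v
  have hPd : P.PosDef := by
    refine posDef_iff_dotProduct_mulVec.mpr ⟨hherm, fun v hv => ?_⟩
    have hstar : star v = v := by funext i; simp
    rw [hstar, hq]
    apply Finset.sum_pos' (fun j _ => dnn _)
    refine ⟨0, Finset.mem_range.mpr (by omega), ?_⟩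
    simp only [pow_zero, Matrix.one_mulVec]
    have : ∃ i, v i ≠ 0 := Function.ne_iff.mp hv
    obtain ⟨i, hi⟩ := this
    apply Finset.sum_pos' (fun i _ => mul_self_nonneg _)
    exact ⟨i, Finset.mem_univ i, mul_self_pos.mpr hi⟩
  refine ⟨P, β, hPd, hβpos, hβlt, ?_⟩
  rw [posSemidef_iff_dotProduct_mulVec]
  constructor
  · have h2 : (Aᵀ * P * A).IsHermitian := Matrix.isHermitian_conjTranspose_mul_mul A hherm
    show ((1 - β) • P - Aᵀ * P * A)ᴴ = _
    rw [conjTranspose_sub, conjTranspose_smul, hherm, h2, star_trivial]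
  · intro v
    have hstar : star v = v := by funext i; simp
    rw [hstar]
    have hsmul : ((1 - β) • P - Aᵀ * P * A) *ᵥ v
        = (1 - β) • (P *ᵥ v) - (Aᵀ * P * A) *ᵥ v := by
      rw [Matrix.sub_mulVec, Matrix.smul_mulVec]
    rw [hsmul, dotProduct_sub, dotProduct_smul, smul_eq_mul]
    have hAq : v ⬝ᵥ ((Aᵀ * P * A) *ᵥ v) = (A *ᵥ v) ⬝ᵥ (P *ᵥ (A *ᵥ v)) := by
      rw [← Matrix.mulVec_mulVec, ← Matrix.mulVec_mulVec, Matrix.dotProduct_mulVec,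
        Matrix.vecMul_transpose]
    rw [hAq]
    -- telescoping
    have hqA : (A *ᵥ v) ⬝ᵥ (P *ᵥ (A *ᵥ v))
        = ∑ j ∈ Finset.range k, ((A ^ (j+1)) *ᵥ v) ⬝ᵥ ((A ^ (j+1)) *ᵥ v) := by
      rw [hq]
      apply Finset.sum_congr rfl
      intro j _
      rw [Matrix.mulVec_mulVec, ← pow_succ]
    rw [hqA]
    set d : ℕ → ℝ := fun j => ((A ^ j) *ᵥ v) ⬝ᵥ ((A ^ j) *ᵥ v) with hd
    have htel : ∑ j ∈ Finset.range k, d j - ∑ j ∈ Finset.range k, d (j+1) = d 0 - d k := by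
      rw [← Finset.sum_sub_distrib, Finset.sum_range_sub' d k]
    have hq' : v ⬝ᵥ (P *ᵥ v) = ∑ j ∈ Finset.range k, d j := hq v
    have hd0 : d 0 = v ⬝ᵥ v := by simp [hd]
    have hdk : d k ≤ ρ ^ 2 * (v ⬝ᵥ v) := key k v
    have hup : v ⬝ᵥ (P *ᵥ v) ≤ c * (v ⬝ᵥ v) := hub v
    have hβq : β * (v ⬝ᵥ (P *ᵥ v)) ≤ β * (c * (v ⬝ᵥ v)) :=
      mul_le_mul_of_nonneg_left hup hβpos.le
    have hbc : β * c ≤ 1 - ρ ^ 2 := by nlinarith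
    have hvv : 0 ≤ v ⬝ᵥ v := dnn v
    have : (1 - β) * (v ⬝ᵥ (P *ᵥ v)) - ∑ j ∈ Finset.range k, d (j+1)
        = (d 0 - d k) - β * (v ⬝ᵥ (P *ᵥ v)) := by
      rw [hq']
      have := htel
      linarith [htel]
    rw [this, hd0]
    nlinarith [mul_le_mul_of_nonneg_left hvv hβpos.le]


/-- A real square matrix is Schur stable if every complex eigenvalue has modulus < 1. -/
def SchurStable {N : ℕ} (A : Matrix (Fin N) (Fin N) ℝ) : Prop :=
  ∀ μ ∈ spectrum ℂ (A.map Complex.ofReal), ‖μ‖ < 1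

/-- Jacobian matrix of a map between finite-dimensional real coordinate spaces. -/
noncomputable def jac {n m : ℕ} (f : (Fin n → ℝ) → (Fin m → ℝ)) (x : Fin n → ℝ) :
    Matrix (Fin m) (Fin n) ℝ :=
  LinearMap.toMatrix' (fderiv ℝ f x).toLinearMap

private lemma jac_chain {n N : ℕ}
    (f : (Fin n → ℝ) → (Fin n → ℝ)) (φ : (Fin n → ℝ) → (Fin N → ℝ))
    (hf : ContDiff ℝ 1 f) (hφ : ContDiff ℝ 1 φ)
    (A : Matrix (Fin N) (Fin N) ℝ)
    (hD1 : ∀ x, φ (f x) = A.mulVec (φ x)) (x : Fin n → ℝ) :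
    jac φ (f x) * jac f x = A * jac φ x := by
  have hdf : DifferentiableAt ℝ f x := (hf.differentiable one_ne_zero) x
  have hdφ : DifferentiableAt ℝ φ (f x) := (hφ.differentiable one_ne_zero) (f x)
  have hdφx : DifferentiableAt ℝ φ x := (hφ.differentiable one_ne_zero) x
  set L : (Fin N → ℝ) →L[ℝ] (Fin N → ℝ) :=
    LinearMap.toContinuousLinearMap (Matrix.mulVecLin A) with hL
  have hcomp : φ ∘ f = fun y => L (φ y) := by
    funext y
    simp [hD1 y, hL, Matrix.mulVecLin]
  have h1 : fderiv ℝ (φ ∘ f) x = (fderiv ℝ φ (f x)).comp (fderiv ℝ f x) :=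
    fderiv_comp x hdφ hdf
  have h2 : fderiv ℝ (φ ∘ f) x = L.comp (fderiv ℝ φ x) := by
    rw [hcomp]
    exact (L.hasFDerivAt.comp x hdφx.hasFDerivAt).fderiv
  have h3 := h1.symm.trans h2
  have h4 := congrArg (fun (T : (Fin n → ℝ) →L[ℝ] (Fin N → ℝ)) =>
    LinearMap.toMatrix' T.toLinearMap) h3
  simp only [ContinuousLinearMap.toLinearMap_comp] at h4
  rw [LinearMap.toMatrix'_comp, LinearMap.toMatrix'_comp] at h4
  have h5 : LinearMap.toMatrix' (L : (Fin N → ℝ) →ₗ[ℝ] (Fin N → ℝ)) = A := by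
    rw [hL, LinearMap.coe_toContinuousLinearMap]
    ext i j
    simp [LinearMap.toMatrix'_apply, Matrix.mulVecLin_apply, Matrix.mulVec, dotProduct, Pi.single_apply]
  rw [h5] at h4
  exact h4

theorem stmt0 {n N : ℕ} (hNn : n ≤ N)
    (f : (Fin n → ℝ) → (Fin n → ℝ)) (φ : (Fin n → ℝ) → (Fin N → ℝ))
    (hf : ContDiff ℝ 1 f) (hφ : ContDiff ℝ 1 φ)
    (A : Matrix (Fin N) (Fin N) ℝ) (hA : SchurStable A)
    (hD1 : ∀ x, φ (f x) = A.mulVec (φ x))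
    (hrank : ∀ x, (jac φ x).rank = n)
    (a₁ a₂ : ℝ) (ha₁ : 0 < a₁) (ha₁₂ : a₁ ≤ a₂)
    (hlow : ∀ x, ((jac φ x)ᵀ * jac φ x - a₁ • (1 : Matrix (Fin n) (Fin n) ℝ)).PosSemidef)
    (hup : ∀ x, (a₂ • (1 : Matrix (Fin n) (Fin n) ℝ) - (jac φ x)ᵀ * jac φ x).PosSemidef) :
    ∃ (P : Matrix (Fin N) (Fin N) ℝ) (β : ℝ), P.PosDef ∧ 0 < β ∧ β < 1 ∧
      ∀ x, ((1 - β) • ((jac φ x)ᵀ * P * jac φ x)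
          - (jac f x)ᵀ * ((jac φ (f x))ᵀ * P * jac φ (f x)) * jac f x).PosSemidef := by
  obtain ⟨P, β, hPd, hβ0, hβ1, hLyap⟩ := lyap A hA
  refine ⟨P, β, hPd, hβ0, hβ1, fun x => ?_⟩
  have hchain := jac_chain f φ hf hφ A hD1 x
  have key2 : (jac f x)ᵀ * ((jac φ (f x))ᵀ * P * jac φ (f x)) * jac f x
      = (A * jac φ x)ᵀ * P * (A * jac φ x) := by
    rw [← hchain, Matrix.transpose_mul]
    simp [Matrix.mul_assoc]
  have heq : (1 - β) • ((jac φ x)ᵀ * P * jac φ x)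
      - (jac f x)ᵀ * ((jac φ (f x))ᵀ * P * jac φ (f x)) * jac f x
      = (jac φ x)ᵀ * ((1 - β) • P - Aᵀ * P * A) * jac φ x := by
    rw [key2]
    simp [Matrix.mul_sub, Matrix.sub_mul, Matrix.mul_smul, Matrix.smul_mul,
      Matrix.transpose_mul, Matrix.mul_assoc]
  rw [heq]
  exact hLyap.conjTranspose_mul_mul_same (jac φ x)
end

section
/- Let A ∈ ℝ^{N×N}, let P ∈ ℝ^{N×N} be symmetric positive definite, and suppose P − Aᵀ P A − ρ I is positive definite for some ρ > 0. Let Φ₁, Φ₂ ∈ ℝ^{N×n} with Φ₁ of full column rank n, and let J ∈ ℝ^{n×n} satisfy Φ₂ J = A Φ₁. Then Φ₁ᵀ P Φ₁ − Jᵀ Φ₂ᵀ P Φ₂ J ≻ ρ Φ₁ᵀ Φ₁ ≽ β Φ₁ᵀ P Φ₁, where β := ρ / λ_max(P) and λ_max(P) denotes the largest eigenvalue of P. -/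
open Matrix

lemma aux_inj {N n : ℕ} {B : Matrix (Fin N) (Fin n) ℝ} (hB : B.rank = n) :
    Function.Injective B.mulVec := by
  have h := LinearMap.finrank_range_add_finrank_ker B.mulVecLin
  rw [show Module.finrank ℝ (LinearMap.range B.mulVecLin) = B.rank from rfl, hB,
    Module.finrank_fintype_fun_eq_card, Fintype.card_fin] at h
  have hk : Module.finrank ℝ (LinearMap.ker B.mulVecLin) = 0 := by omega
  have : LinearMap.ker B.mulVecLin = ⊥ := Submodule.finrank_eq_zero.mp hk
  have := LinearMap.ker_eq_bot.mp this
  rwa [Matrix.coe_mulVecLin] at this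

lemma aux_posdef_conj {N n : ℕ} {M : Matrix (Fin N) (Fin N) ℝ} (hM : M.PosDef)
    {B : Matrix (Fin N) (Fin n) ℝ} (hB : Function.Injective B.mulVec) :
    (Bᵀ * M * B).PosDef := by
  rw [Matrix.posDef_iff_dotProduct_mulVec]
  constructor
  · have := Matrix.isHermitian_conjTranspose_mul_mul B hM.1
    simpa using this
  · intro x hx
    have hBx : B *ᵥ x ≠ 0 := fun h => hx (hB (by simpa using h))
    have h2 := (Matrix.posDef_iff_dotProduct_mulVec.mp hM).2 hBx
    simp only [star_trivial, dotProduct_mulVec] at h2 ⊢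
    rwa [Matrix.mul_assoc, ← Matrix.vecMul_vecMul, Matrix.vecMul_transpose,
      ← Matrix.vecMul_vecMul]

lemma aux_psd_conj {N n : ℕ} {M : Matrix (Fin N) (Fin N) ℝ} (hM : M.PosSemidef)
    (B : Matrix (Fin N) (Fin n) ℝ) : (Bᵀ * M * B).PosSemidef := by
  have := hM.conjTranspose_mul_mul_same B
  simpa using this

lemma aux_psd_smul {N : ℕ} {M : Matrix (Fin N) (Fin N) ℝ} (hM : M.PosSemidef)
    {a : ℝ} (ha : 0 ≤ a) : (a • M).PosSemidef := by
  rw [Matrix.posSemidef_iff_dotProduct_mulVec]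
  constructor
  · unfold Matrix.IsHermitian
    rw [Matrix.conjTranspose_smul, hM.1.eq]
    simp
  · intro x
    have := (Matrix.posSemidef_iff_dotProduct_mulVec.mp hM).2 x
    rw [Matrix.smul_mulVec, dotProduct_smul]
    exact mul_nonneg ha this

lemma aux_smul_one_sub {N : ℕ} {P : Matrix (Fin N) (Fin N) ℝ} (hP : P.IsHermitian)
    (hpos : 0 < N) :
    ((⨆ i, hP.eigenvalues i) • (1 : Matrix (Fin N) (Fin N) ℝ) - P).PosSemidef := by
  have : Nonempty (Fin N) := ⟨⟨0, hpos⟩⟩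
  set c := ⨆ i, hP.eigenvalues i with hc
  set U : Matrix (Fin N) (Fin N) ℝ := (hP.eigenvectorUnitary : Matrix (Fin N) (Fin N) ℝ)
    with hUdef
  have hU : U * star U = 1 := Matrix.mem_unitaryGroup_iff.mp hP.eigenvectorUnitary.2
  have hspec := hP.spectral_theorem
  rw [Unitary.conjStarAlgAut_apply] at hspec
  have hdiag : (diagonal (fun i => c - hP.eigenvalues i) : Matrix (Fin N) (Fin N) ℝ)
      = c • 1 - diagonal (RCLike.ofReal ∘ hP.eigenvalues) := by
    ext i j
    by_cases h : i = j <;>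
      simp [h, Matrix.diagonal_apply, Matrix.one_apply, Matrix.sub_apply]
  have key : c • (1 : Matrix (Fin N) (Fin N) ℝ) - P
      = U * diagonal (fun i => c - hP.eigenvalues i) * star U := by
    rw [hdiag, Matrix.mul_sub, Matrix.sub_mul, ← hspec]
    congr 1
    rw [Matrix.mul_smul, Matrix.smul_mul, Matrix.mul_one, hU]
  rw [key]
  have hentries : ∀ i, 0 ≤ c - hP.eigenvalues i := by
    intro i
    have : hP.eigenvalues i ≤ c :=
      le_ciSup (Set.Finite.bddAbove (Set.finite_range _)) i
    linarith
  have hd : (diagonal (fun i => c - hP.eigenvalues i) : Matrix (Fin N) (Fin N) ℝ).PosSemidef :=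
    Matrix.posSemidef_diagonal_iff.mpr hentries
  have := hd.mul_mul_conjTranspose_same U
  simpa [Matrix.star_eq_conjTranspose] using this

theorem stmt2 {N n : ℕ} (A P : Matrix (Fin N) (Fin N) ℝ) (ρ : ℝ) (hρ : 0 < ρ)
    (hP : P.PosDef)
    (hLyap : (P - Aᵀ * P * A - ρ • (1 : Matrix (Fin N) (Fin N) ℝ)).PosDef)
    (Φ₁ Φ₂ : Matrix (Fin N) (Fin n) ℝ) (hΦ₁ : Φ₁.rank = n)
    (J : Matrix (Fin n) (Fin n) ℝ) (hJ : Φ₂ * J = A * Φ₁) :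
    ((Φ₁ᵀ * P * Φ₁ - Jᵀ * Φ₂ᵀ * P * Φ₂ * J) - ρ • (Φ₁ᵀ * Φ₁)).PosDef ∧
    (ρ • (Φ₁ᵀ * Φ₁) - (ρ / (⨆ i, hP.1.eigenvalues i)) • (Φ₁ᵀ * P * Φ₁)).PosSemidef := by
  have hinj := aux_inj hΦ₁
  constructor
  · have heq : (Φ₁ᵀ * P * Φ₁ - Jᵀ * Φ₂ᵀ * P * Φ₂ * J) - ρ • (Φ₁ᵀ * Φ₁)
        = Φ₁ᵀ * (P - Aᵀ * P * A - ρ • (1 : Matrix (Fin N) (Fin N) ℝ)) * Φ₁ := by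
      have h2 : Jᵀ * Φ₂ᵀ * P * Φ₂ * J = Φ₁ᵀ * (Aᵀ * P * A) * Φ₁ := by
        have h3 : (Φ₂ * J)ᵀ * P * (Φ₂ * J) = (A * Φ₁)ᵀ * P * (A * Φ₁) := by rw [hJ]
        simpa [Matrix.transpose_mul, Matrix.mul_assoc] using h3
      simp only [Matrix.mul_sub, Matrix.sub_mul, Matrix.mul_smul, Matrix.smul_mul,
        Matrix.mul_one, h2]
    rw [heq]
    exact aux_posdef_conj hLyap hinj
  · rcases Nat.eq_zero_or_pos N with h0 | hpos
    · subst h0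
      have hn : n = 0 := by
        have := Φ₁.rank_le_card_height
        simp at this
        omega
      subst hn
      constructor
      · ext i; exact absurd i.2 (by omega)
      · intro x; simp [dotProduct, Subsingleton.elim x 0]
    · set c := ⨆ i, hP.1.eigenvalues i with hc
      have hne : Nonempty (Fin N) := ⟨⟨0, hpos⟩⟩
      have hcpos : 0 < c := by
        have h1 : hP.1.eigenvalues hne.some ≤ c :=
          le_ciSup (Set.Finite.bddAbove (Set.finite_range _)) _
        have := hP.eigenvalues_pos hne.some
        linarith
      have hM' : (ρ / c) • (c • (1 : Matrix (Fin N) (Fin N) ℝ) - P)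
          = ρ • (1 : Matrix (Fin N) (Fin N) ℝ) - (ρ / c) • P := by
        rw [smul_sub, smul_smul, div_mul_cancel₀ _ hcpos.ne']
      have heq : ρ • (Φ₁ᵀ * Φ₁) - (ρ / c) • (Φ₁ᵀ * P * Φ₁)
          = Φ₁ᵀ * (ρ • (1 : Matrix (Fin N) (Fin N) ℝ) - (ρ / c) • P) * Φ₁ := by
        simp only [Matrix.mul_sub, Matrix.sub_mul, Matrix.mul_smul, Matrix.smul_mul,
          Matrix.mul_one]
      rw [heq, ← hM']
      exact aux_psd_conj (aux_psd_smul (aux_smul_one_sub hP.1 hpos) (by positivity)) Φ₁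
end

section
/- Let f : ℝⁿ → ℝⁿ be a bijection whose inverse f⁻¹ is continuous and satisfies |f⁻¹(y)| ≤ c₁ + c₂|y| for all y and some constants c₁, c₂ > 0. Let H : ℝⁿ → ℝᴺ be continuous with |H(x)| ≤ L_H (1 + |x|) for all x and some L_H > 0, and let A ∈ ℝ^{N×N} have operator norm ‖A‖ ≤ ρ with ρ < min{1, c₂⁻¹}. Then for every x ∈ ℝⁿ the series T(x) := Σ_{j=0}^{∞} Aʲ H(f^{−(j+1)}(x)) converges absolutely, and the resulting map T : ℝⁿ → ℝᴺ satisfies the functional equation T(f(x)) = A T(x) + H(x) for all x ∈ ℝⁿ. -/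
open Matrix

theorem stmt5 {n N : ℕ}
    (f g : EuclideanSpace ℝ (Fin n) → EuclideanSpace ℝ (Fin n))
    (hbij : Function.Bijective f)
    (hgl : Function.LeftInverse g f) (hgr : Function.RightInverse g f)
    (hgc : Continuous g)
    (c₁ c₂ : ℝ) (hc₁ : 0 < c₁) (hc₂ : 0 < c₂)
    (hginv : ∀ y, ‖g y‖ ≤ c₁ + c₂ * ‖y‖)
    (H : EuclideanSpace ℝ (Fin n) → EuclideanSpace ℝ (Fin N))
    (hHc : Continuous H) (LH : ℝ) (hLH : 0 < LH)
    (hH : ∀ x, ‖H x‖ ≤ LH * (1 + ‖x‖))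
    (A : Matrix (Fin N) (Fin N) ℝ) (ρ : ℝ)
    (hA : ‖Matrix.toEuclideanCLM (𝕜 := ℝ) A‖ ≤ ρ) (hρ : ρ < min 1 c₂⁻¹) :
    (∀ x, Summable fun j : ℕ =>
        ‖Matrix.toEuclideanCLM (𝕜 := ℝ) (A ^ j) (H (g^[j + 1] x))‖) ∧
    (∀ x, (∑' j : ℕ, Matrix.toEuclideanCLM (𝕜 := ℝ) (A ^ j) (H (g^[j + 1] (f x))))
        = Matrix.toEuclideanCLM (𝕜 := ℝ) A
            (∑' j : ℕ, Matrix.toEuclideanCLM (𝕜 := ℝ) (A ^ j) (H (g^[j + 1] x))) + H x) := by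
  have hρ0 : 0 ≤ ρ := le_trans (norm_nonneg _) hA
  set K : ℝ := max 1 c₂ with hKdef
  have hK1 : (1:ℝ) ≤ K := le_max_left _ _
  have hKc : c₂ ≤ K := le_max_right _ _
  have hK0 : (0:ℝ) < K := lt_of_lt_of_le one_pos hK1
  have hr0 : 0 ≤ ρ * K := mul_nonneg hρ0 hK0.le
  have hr : ρ * K < 1 := by
    rcases le_total c₂ 1 with h | h
    · have : K = 1 := max_eq_left h
      rw [this, mul_one]
      exact lt_of_lt_of_le hρ (min_le_left _ _)
    · have : K = c₂ := max_eq_right h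
      rw [this]
      have h2 : ρ < c₂⁻¹ := lt_of_lt_of_le hρ (min_le_right _ _)
      calc ρ * c₂ < c₂⁻¹ * c₂ := by
            exact mul_lt_mul_of_pos_right h2 hc₂
        _ = 1 := inv_mul_cancel₀ hc₂.ne'
  -- growth bound on iterates of g
  have hgrow : ∀ (x : EuclideanSpace ℝ (Fin n)) (j : ℕ),
      1 + ‖g^[j] x‖ ≤ (1 + ‖x‖) * (1 + c₁) * (j + 1) * K ^ j := by
    intro x j
    induction j with
    | zero =>
      simp only [Function.iterate_zero, id_eq, Nat.cast_zero, pow_zero]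
      have := norm_nonneg x
      nlinarith
    | succ j ih =>
      have hKj : (1:ℝ) ≤ K ^ j := one_le_pow₀ hK1
      have hM0 : 0 ≤ ‖g^[j] x‖ := norm_nonneg _
      have hx0 : 0 ≤ ‖x‖ := norm_nonneg x
      have h1 : ‖g^[j+1] x‖ ≤ c₁ + c₂ * ‖g^[j] x‖ := by
        rw [Function.iterate_succ_apply']
        exact hginv _
      have h2 : c₂ * ‖g^[j] x‖ ≤ K * (1 + ‖g^[j] x‖) := by nlinarith
      have h3 : (1 + c₁ : ℝ) ≤ (1 + ‖x‖) * (1 + c₁) * K ^ (j+1) := by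
        have hKj1 : (1:ℝ) ≤ K ^ (j+1) := one_le_pow₀ hK1
        have e1 : (1 + c₁ : ℝ) ≤ (1 + ‖x‖) * (1 + c₁) := by nlinarith
        have e2 : (1 + ‖x‖) * (1 + c₁) ≤ (1 + ‖x‖) * (1 + c₁) * K ^ (j+1) :=
          le_mul_of_one_le_right (by positivity) hKj1
        linarith
      have h4 : K * (1 + ‖g^[j] x‖) ≤ (1 + ‖x‖) * (1 + c₁) * (j + 1) * K ^ (j+1) := by
        calc K * (1 + ‖g^[j] x‖) ≤ K * ((1 + ‖x‖) * (1 + c₁) * (j + 1) * K ^ j) := by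
              apply mul_le_mul_of_nonneg_left ih hK0.le
          _ = (1 + ‖x‖) * (1 + c₁) * (j + 1) * K ^ (j+1) := by ring
      have : 1 + ‖g^[j+1] x‖ ≤ (1 + c₁) + K * (1 + ‖g^[j] x‖) := by nlinarith
      calc 1 + ‖g^[j+1] x‖ ≤ (1 + c₁) + K * (1 + ‖g^[j] x‖) := this
        _ ≤ (1 + ‖x‖) * (1 + c₁) * K ^ (j+1) + (1 + ‖x‖) * (1 + c₁) * (j + 1) * K ^ (j+1) := by
            exact add_le_add h3 h4
        _ = (1 + ‖x‖) * (1 + c₁) * (↑(j+1) + 1) * K ^ (j+1) := by push_cast; ring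
  -- term bound
  have hterm : ∀ (x : EuclideanSpace ℝ (Fin n)) (j : ℕ),
      ‖Matrix.toEuclideanCLM (𝕜 := ℝ) (A ^ j) (H (g^[j + 1] x))‖
        ≤ LH * (1 + ‖x‖) * (1 + c₁) * K * ((j + 2) * (ρ * K) ^ j) := by
    intro x j
    have hmap : Matrix.toEuclideanCLM (𝕜 := ℝ) (A ^ j)
        = (Matrix.toEuclideanCLM (𝕜 := ℝ) A) ^ j := map_pow _ _ _
    have hn1 : ‖Matrix.toEuclideanCLM (𝕜 := ℝ) (A ^ j)‖ ≤ ρ ^ j := by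
      rw [hmap]
      induction j with
      | zero =>
        simp only [pow_zero, ContinuousLinearMap.one_def]
        exact ContinuousLinearMap.norm_id_le
      | succ j ihj =>
        calc ‖(Matrix.toEuclideanCLM (𝕜 := ℝ) A) ^ (j + 1)‖
            = ‖(Matrix.toEuclideanCLM (𝕜 := ℝ) A) ^ j * Matrix.toEuclideanCLM (𝕜 := ℝ) A‖ := by
              rw [pow_succ]
          _ ≤ ‖(Matrix.toEuclideanCLM (𝕜 := ℝ) A) ^ j‖ * ‖Matrix.toEuclideanCLM (𝕜 := ℝ) A‖ :=
              norm_mul_le _ _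
          _ ≤ ρ ^ j * ρ := mul_le_mul (ihj (map_pow _ _ _)) hA (norm_nonneg _) (by positivity)
          _ = ρ ^ (j + 1) := (pow_succ ρ j).symm
    have hn2 : ‖H (g^[j + 1] x)‖ ≤ LH * ((1 + ‖x‖) * (1 + c₁) * (j + 2) * K ^ (j+1)) := by
      calc ‖H (g^[j + 1] x)‖ ≤ LH * (1 + ‖g^[j + 1] x‖) := hH _
        _ ≤ LH * ((1 + ‖x‖) * (1 + c₁) * (↑(j+1) + 1) * K ^ (j+1)) := by
            apply mul_le_mul_of_nonneg_left (hgrow x (j+1)) hLH.le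
        _ = LH * ((1 + ‖x‖) * (1 + c₁) * (j + 2) * K ^ (j+1)) := by push_cast; ring
    calc ‖Matrix.toEuclideanCLM (𝕜 := ℝ) (A ^ j) (H (g^[j + 1] x))‖
        ≤ ‖Matrix.toEuclideanCLM (𝕜 := ℝ) (A ^ j)‖ * ‖H (g^[j + 1] x)‖ :=
          ContinuousLinearMap.le_opNorm _ _
      _ ≤ ρ ^ j * (LH * ((1 + ‖x‖) * (1 + c₁) * (j + 2) * K ^ (j+1))) := by
          apply mul_le_mul hn1 hn2 (norm_nonneg _) (by positivity)
      _ = LH * (1 + ‖x‖) * (1 + c₁) * K * ((j + 2) * (ρ * K) ^ j) := by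
          rw [mul_pow]; ring
  -- summability of the majorant
  have hmaj : Summable fun j : ℕ => ((j : ℝ) + 2) * (ρ * K) ^ j := by
    have h1 : Summable fun j : ℕ => (j : ℝ) ^ 1 * (ρ * K) ^ j :=
      summable_pow_mul_geometric_of_norm_lt_one 1 (by rwa [Real.norm_eq_abs, abs_of_nonneg hr0])
    have h2 : Summable fun j : ℕ => (ρ * K) ^ j := summable_geometric_of_lt_one hr0 hr
    have := h1.add (h2.mul_left 2)
    apply this.congr
    intro j
    ring
  have hsumnorm : ∀ x, Summable fun j : ℕ =>
      ‖Matrix.toEuclideanCLM (𝕜 := ℝ) (A ^ j) (H (g^[j + 1] x))‖ := by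
    intro x
    apply Summable.of_nonneg_of_le (fun j => norm_nonneg _) (hterm x)
      (hmaj.mul_left (LH * (1 + ‖x‖) * (1 + c₁) * K))
  refine ⟨hsumnorm, ?_⟩
  intro x
  have hsum : Summable fun j : ℕ =>
      Matrix.toEuclideanCLM (𝕜 := ℝ) (A ^ j) (H (g^[j + 1] x)) :=
    (hsumnorm x).of_norm
  set B := Matrix.toEuclideanCLM (𝕜 := ℝ) A with hBdef
  -- rewrite left side: g^[j+1] (f x) = g^[j] x
  have hgf : ∀ j : ℕ, g^[j + 1] (f x) = g^[j] x := by
    intro j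
    rw [Function.iterate_succ_apply, hgl x]
  have hshift : ∀ j : ℕ,
      Matrix.toEuclideanCLM (𝕜 := ℝ) (A ^ (j + 1)) (H (g^[j + 1] x))
        = B (Matrix.toEuclideanCLM (𝕜 := ℝ) (A ^ j) (H (g^[j + 1] x))) := by
    intro j
    have : (A : Matrix (Fin N) (Fin N) ℝ) ^ (j + 1) = A * A ^ j := by
      rw [pow_succ']
    rw [this, _root_.map_mul]
    rfl
  set F : ℕ → EuclideanSpace ℝ (Fin N) := fun j =>
    Matrix.toEuclideanCLM (𝕜 := ℝ) (A ^ j) (H (g^[j] x)) with hFdef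
  have hF1 : ∀ j : ℕ, F (j + 1) = B (Matrix.toEuclideanCLM (𝕜 := ℝ) (A ^ j) (H (g^[j + 1] x))) := by
    intro j
    rw [hFdef]
    exact hshift j
  have hFs : Summable F := by
    rw [← summable_nat_add_iff 1]
    apply Summable.congr (hsum.map B B.continuous)
    intro j
    exact (hF1 j).symm
  have hLHS : (∑' j : ℕ, Matrix.toEuclideanCLM (𝕜 := ℝ) (A ^ j) (H (g^[j + 1] (f x))))
      = ∑' j : ℕ, F j := by
    apply tsum_congr
    intro j
    rw [hgf j]
  rw [hLHS]
  rw [Summable.tsum_eq_zero_add hFs]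
  have hF0 : F 0 = H x := by
    rw [hFdef]
    simp
  rw [hF0]
  have : (∑' j : ℕ, F (j + 1))
      = B (∑' j : ℕ, Matrix.toEuclideanCLM (𝕜 := ℝ) (A ^ j) (H (g^[j + 1] x))) := by
    rw [B.map_tsum hsum]
    exact tsum_congr hF1
  rw [this]
  abel
end

section
/- Let L ∈ ℝ^{2N×2N}, R ∈ ℝ^{N×N}, and ε > 0, and set M := L Lᵀ + ε I ∈ ℝ^{2N×2N} with N×N blocks M₁₁, M₁₂, M₂₁, M₂₂ (so M = [[M₁₁, M₁₂],[M₂₁, M₂₂]]). Then the matrix M₁₁ + M₂₂ + R − Rᵀ is invertible, and the matrix A(L,R) := 2 (M₁₁ + M₂₂ + R − Rᵀ)⁻¹ M₂₁ is Schur stable. -/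
open Matrix
open scoped ComplexOrder

private lemma conj_quad {n : Type*} [Fintype n] (A : Matrix n n ℂ) (v : n → ℂ) :
    star (star v ⬝ᵥ A *ᵥ v) = star v ⬝ᵥ Aᴴ *ᵥ v := by
  rw [star_dotProduct, star_star, star_mulVec, ← dotProduct_mulVec]

theorem stmt6 {N : ℕ} (L : Matrix (Fin N ⊕ Fin N) (Fin N ⊕ Fin N) ℝ)
    (R : Matrix (Fin N) (Fin N) ℝ) (ε : ℝ) (hε : 0 < ε)
    (M : Matrix (Fin N ⊕ Fin N) (Fin N ⊕ Fin N) ℝ)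
    (hM : M = L * Lᵀ + ε • (1 : Matrix (Fin N ⊕ Fin N) (Fin N ⊕ Fin N) ℝ)) :
    IsUnit (M.toBlocks₁₁ + M.toBlocks₂₂ + R - Rᵀ) ∧
    SchurStable ((2 : ℝ) • ((M.toBlocks₁₁ + M.toBlocks₂₂ + R - Rᵀ)⁻¹ * M.toBlocks₂₁)) := by
  classical
  set P : Matrix (Fin N) (Fin N) ℝ := M.toBlocks₁₁ + M.toBlocks₂₂ + R - Rᵀ with hPdef
  set Mc : Matrix (Fin N ⊕ Fin N) (Fin N ⊕ Fin N) ℂ := M.map Complex.ofReal with hMcdef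
  set Ac : Matrix (Fin N) (Fin N) ℂ := M.toBlocks₁₁.map Complex.ofReal with hAcdef
  set Bc : Matrix (Fin N) (Fin N) ℂ := M.toBlocks₁₂.map Complex.ofReal with hBcdef
  set Cc : Matrix (Fin N) (Fin N) ℂ := M.toBlocks₂₁.map Complex.ofReal with hCcdef
  set Dc : Matrix (Fin N) (Fin N) ℂ := M.toBlocks₂₂.map Complex.ofReal with hDcdef
  set Sc : Matrix (Fin N) (Fin N) ℂ := (R - Rᵀ).map Complex.ofReal with hScdef
  set Pc : Matrix (Fin N) (Fin N) ℂ := P.map Complex.ofReal with hPcdef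
  -- M mapped to ℂ is positive definite
  have hMcPD : Mc.PosDef := by
    have h1 : Mc = (L.map Complex.ofReal) * (L.map Complex.ofReal)ᴴ
        + Matrix.diagonal (fun _ => (ε : ℂ)) := by
      have hLH : (L.map Complex.ofReal)ᴴ = Lᵀ.map Complex.ofReal := by
        ext i j
        simp [conjTranspose_apply, Complex.conj_ofReal]
      have hmul : ((L * Lᵀ).map Complex.ofReal)
          = (L.map Complex.ofReal) * (Lᵀ.map Complex.ofReal) := by
        exact Matrix.map_mul (f := Complex.ofRealHom)
      have hdiag : ((ε • (1 : Matrix (Fin N ⊕ Fin N) (Fin N ⊕ Fin N) ℝ)).map Complex.ofReal)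
          = Matrix.diagonal (fun _ => (ε : ℂ)) := by
        rw [smul_one_eq_diagonal]
        rw [Matrix.diagonal_map (by simp)]
      rw [hMcdef, hM, Matrix.map_add, hmul, hdiag, hLH]
      exact Complex.ofReal_add
    rw [h1]
    exact Matrix.PosDef.posSemidef_add (posSemidef_self_mul_conjTranspose _)
      (Matrix.PosDef.diagonal fun _ => Complex.zero_lt_real.2 hε)
  -- block decomposition of the quadratic form
  have hblocks : Mc = fromBlocks Ac Bc Cc Dc := by
    rw [← fromBlocks_toBlocks Mc]; rfl
  have quad : ∀ x y : Fin N → ℂ,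
      star (Sum.elim x y) ⬝ᵥ Mc *ᵥ (Sum.elim x y)
        = star x ⬝ᵥ (Ac *ᵥ x) + star x ⬝ᵥ (Bc *ᵥ y)
          + star y ⬝ᵥ (Cc *ᵥ x) + star y ⬝ᵥ (Dc *ᵥ y) := by
    intro x y
    rw [hblocks, fromBlocks_mulVec, Function.star_sumElim, sumElim_dotProduct_sumElim,
      dotProduct_add, dotProduct_add]
    simp only [Sum.elim_comp_inl, Sum.elim_comp_inr]
    ring
  have ha : ∀ v : Fin N → ℂ, v ≠ 0 → 0 < star v ⬝ᵥ (Ac *ᵥ v) := by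
    intro v hv
    have hw : (Sum.elim v (0 : Fin N → ℂ)) ≠ 0 := by
      intro h0
      apply hv
      funext i
      exact congrFun h0 (Sum.inl i)
    have := hMcPD.dotProduct_mulVec_pos hw
    rw [quad] at this
    simpa using this
  have hd : ∀ v : Fin N → ℂ, v ≠ 0 → 0 < star v ⬝ᵥ (Dc *ᵥ v) := by
    intro v hv
    have hw : (Sum.elim (0 : Fin N → ℂ) v) ≠ 0 := by
      intro h0
      apply hv
      funext i
      exact congrFun h0 (Sum.inr i)
    have := hMcPD.dotProduct_mulVec_pos hw
    rw [quad] at this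
    simpa using this
  -- Bc is the conjugate transpose of Cc
  have hBC : Ccᴴ = Bc := by
    have hherm := hMcPD.1
    ext i j
    have h2 := congrFun (congrFun hherm (Sum.inl i)) (Sum.inr j)
    simpa [hblocks, conjTranspose_apply, fromBlocks] using h2
  -- skewness of Sc
  have hSk : Scᴴ = -Sc := by
    ext i j
    simp [hScdef, conjTranspose_apply, Complex.conj_ofReal, Matrix.sub_apply, transpose_apply]
  have hsre : ∀ v : Fin N → ℂ, (star v ⬝ᵥ Sc *ᵥ v).re = 0 := by
    intro v
    have h1 : star (star v ⬝ᵥ Sc *ᵥ v) = -(star v ⬝ᵥ Sc *ᵥ v) := by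
      rw [conj_quad, hSk, neg_mulVec, dotProduct_neg]
    have h2 := congrArg Complex.re h1
    simp only [Complex.star_def, Complex.conj_re, Complex.neg_re] at h2
    linarith
  -- the key strict inequality  |c|² < a·d
  have hkey : ∀ v : Fin N → ℂ, v ≠ 0 →
      Complex.normSq (star v ⬝ᵥ Cc *ᵥ v)
        < (star v ⬝ᵥ Ac *ᵥ v).re * (star v ⬝ᵥ Dc *ᵥ v).re := by
    intro v hv
    set a : ℂ := star v ⬝ᵥ Ac *ᵥ v with hadef
    set d : ℂ := star v ⬝ᵥ Dc *ᵥ v with hddef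
    set c : ℂ := star v ⬝ᵥ Cc *ᵥ v with hcdef
    have hapos := ha v hv
    have hdpos := hd v hv
    have har : 0 < a.re := (Complex.lt_def.1 hapos).1
    have haim : a.im = 0 := ((Complex.lt_def.1 hapos).2).symm
    have hdim : d.im = 0 := ((Complex.lt_def.1 hdpos).2).symm
    have haeq : a = ((a.re : ℝ) : ℂ) := Complex.ext rfl (by simp [haim])
    have hdeq : d = ((d.re : ℝ) : ℂ) := Complex.ext rfl (by simp [hdim])
    have hbc : star v ⬝ᵥ Bc *ᵥ v = star c := by
      rw [← hBC, ← conj_quad, hcdef]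
    set w : (Fin N ⊕ Fin N) → ℂ :=
      Sum.elim ((-(star c)) • v) (((a.re : ℝ) : ℂ) • v) with hwdef
    have hw : w ≠ 0 := by
      intro h0
      apply hv
      funext i
      have := congrFun h0 (Sum.inr i)
      simp only [hwdef, Sum.elim_inr, Pi.smul_apply, Pi.zero_apply, smul_eq_mul] at this
      rcases mul_eq_zero.1 this with h | h
      · exact absurd (Complex.ofReal_eq_zero.1 h) (ne_of_gt har)
      · exact h
    have hQ := hMcPD.dotProduct_mulVec_pos hw
    rw [hwdef, quad] at hQ
    simp only [star_smul, smul_dotProduct, mulVec_smul, dotProduct_smul, smul_eq_mul,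
      star_neg, star_star] at hQ
    rw [hbc, ← hcdef, ← hadef, ← hddef] at hQ
    have key2 := lt_of_lt_of_eq hQ
      (show _ = ((a.re * (a.re * d.re - Complex.normSq c) : ℝ) : ℂ) from by
        simp only [Complex.star_def, Complex.conj_ofReal]
        push_cast [Complex.ofReal_mul, Complex.ofReal_sub]
        linear_combination (c * (starRingEnd ℂ) c) * haeq + ((a.re : ℂ)) ^ 2 * hdeq
          - ((a.re : ℂ)) * (Complex.mul_conj c))
    have := Complex.zero_lt_real.1 key2
    nlinarith [Complex.normSq_nonneg c, har]
  -- invertibility of Pc and P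
  have hPc_eq : Pc = Ac + Dc + Sc := by
    ext i j
    simp [hPcdef, hPdef, hAcdef, hDcdef, hScdef, Matrix.map_apply, Matrix.add_apply, Matrix.sub_apply]
    push_cast
    ring
  have hPcquad : ∀ v : Fin N → ℂ,
      star v ⬝ᵥ Pc *ᵥ v
        = star v ⬝ᵥ Ac *ᵥ v + star v ⬝ᵥ Dc *ᵥ v + star v ⬝ᵥ Sc *ᵥ v := by
    intro v
    rw [hPc_eq, add_mulVec, add_mulVec, dotProduct_add, dotProduct_add]
  have hPcdet : Pc.det ≠ 0 := by
    intro h0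
    obtain ⟨v, hv, hveq⟩ := (Matrix.exists_mulVec_eq_zero_iff).2 h0
    have h1 : star v ⬝ᵥ Pc *ᵥ v = 0 := by rw [hveq, dotProduct_zero]
    have h2 := congrArg Complex.re h1
    rw [hPcquad] at h2
    simp only [Complex.add_re, Complex.zero_re, hsre v] at h2
    have har := (Complex.lt_def.1 (ha v hv)).1
    have hdr := (Complex.lt_def.1 (hd v hv)).1
    simp only [Complex.zero_re] at har hdr
    linarith
  have hPdet : P.det ≠ 0 := by
    intro h0
    apply hPcdet
    have hmapdet : Complex.ofRealHom P.det = Pc.det := RingHom.map_det Complex.ofRealHom P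
    rw [← hmapdet, h0, map_zero]
  have hPunit : IsUnit P := by
    rw [Matrix.isUnit_iff_isUnit_det]
    exact isUnit_iff_ne_zero.2 hPdet
  refine ⟨hPunit, ?_⟩
  -- Schur stability
  intro μ hμ
  set T : Matrix (Fin N) (Fin N) ℂ :=
    (((2 : ℝ) • (P⁻¹ * M.toBlocks₂₁)).map Complex.ofReal) with hTdef
  rw [spectrum.mem_iff] at hμ
  have hdet : ((algebraMap ℂ (Matrix (Fin N) (Fin N) ℂ)) μ - T).det = 0 := by
    by_contra h
    exact hμ ((Matrix.isUnit_iff_isUnit_det _).2 (isUnit_iff_ne_zero.2 h))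
  obtain ⟨v, hv, hveq⟩ := (Matrix.exists_mulVec_eq_zero_iff).2 hdet
  have hTv : T *ᵥ v = μ • v := by
    have halg : (algebraMap ℂ (Matrix (Fin N) (Fin N) ℂ)) μ = μ • 1 := by
      rw [Matrix.algebraMap_eq_diagonal]
      rw [smul_one_eq_diagonal]
      rfl
    rw [halg, sub_mulVec, smul_mulVec, one_mulVec] at hveq
    have := sub_eq_zero.1 hveq
    exact this.symm
  -- P * T = 2 • C  (over ℂ)
  have hPT : Pc * T = (2 : ℂ) • Cc := by
    have hreal : P * ((2 : ℝ) • (P⁻¹ * M.toBlocks₂₁)) = (2 : ℝ) • M.toBlocks₂₁ := by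
      rw [mul_smul_comm, Matrix.mul_nonsing_inv_cancel_left _ _ (isUnit_iff_ne_zero.2 hPdet)]
    have hmul : ((P * ((2 : ℝ) • (P⁻¹ * M.toBlocks₂₁))).map Complex.ofReal) = Pc * T := by
      rw [hPcdef, hTdef]
      exact Matrix.map_mul (f := Complex.ofRealHom)
    have hsm : (((2 : ℝ) • M.toBlocks₂₁).map Complex.ofReal) = (2 : ℂ) • Cc := by
      ext i j
      simp [Matrix.map_apply, hCcdef]
    calc Pc * T = ((P * ((2 : ℝ) • (P⁻¹ * M.toBlocks₂₁))).map Complex.ofReal) := hmul.symm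
      _ = (((2 : ℝ) • M.toBlocks₂₁).map Complex.ofReal) := by rw [hreal]
      _ = (2 : ℂ) • Cc := hsm
  have he : ((2 : ℂ) • Cc) *ᵥ v = μ • (Pc *ᵥ v) := by
    rw [← hPT, ← mulVec_mulVec, hTv, mulVec_smul]
  have he2 : (2 : ℂ) * (star v ⬝ᵥ Cc *ᵥ v) = μ * (star v ⬝ᵥ Pc *ᵥ v) := by
    have := congrArg (fun u => star v ⬝ᵥ u) he
    simpa [smul_mulVec, dotProduct_smul, smul_eq_mul] using this
  set a : ℂ := star v ⬝ᵥ Ac *ᵥ v with hadef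
  set d : ℂ := star v ⬝ᵥ Dc *ᵥ v with hddef
  set c : ℂ := star v ⬝ᵥ Cc *ᵥ v with hcdef
  set s : ℂ := star v ⬝ᵥ Sc *ᵥ v with hsdef
  have har := (Complex.lt_def.1 (ha v hv)).1
  have hdr := (Complex.lt_def.1 (hd v hv)).1
  simp only [Complex.zero_re] at har hdr
  have hkey' := hkey v hv
  set p : ℂ := a + d + s with hpdef
  have he3 : (2 : ℂ) * c = μ * p := by
    rw [he2, hPcquad v]
  have hs0 : s.re = 0 := hsre v
  have hpre : p.re = a.re + d.re := by
    simp [hpdef, Complex.add_re, hs0]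
  have hple : a.re + d.re ≤ ‖p‖ := by
    rw [← hpre]
    exact (Complex.re_le_norm p)
  have habs : 2 * ‖c‖ = ‖μ‖ * ‖p‖ := by
    have := congrArg (‖·‖) he3
    simpa [norm_mul, Complex.norm_two] using this
  have hc2 : ‖c‖ ^ 2 < a.re * d.re := by
    rw [Complex.sq_norm]
    exact hkey'
  have hcabs : 2 * ‖c‖ < a.re + d.re := by
    nlinarith [norm_nonneg c, sq_nonneg (a.re - d.re), har, hdr]
  have hfin : ‖μ‖ * (a.re + d.re) < a.re + d.re := by
    calc ‖μ‖ * (a.re + d.re) ≤ ‖μ‖ * ‖p‖ :=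
          mul_le_mul_of_nonneg_left hple (norm_nonneg μ)
      _ = 2 * ‖c‖ := habs.symm
      _ < a.re + d.re := hcabs
  have hsum : 0 < a.re + d.re := by linarith
  by_contra hcon
  push_neg at hcon
  nlinarith [hfin, hsum, hcon]
end

section
/- Let E, F, P ∈ ℝ^{N×N} and suppose the 2N×2N block matrix [[E + Eᵀ − P, Fᵀ],[F, P]] is positive definite. Then E is invertible and the matrix E⁻¹ F is Schur stable. -/
open Matrix Complex

lemma re_quad_pos {n : Type*} [Fintype n] {M : Matrix n n ℝ} (hM : M.PosDef)
    {z : n → ℂ} (hz : z ≠ 0) :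
    0 < (star z ⬝ᵥ (M.map Complex.ofReal) *ᵥ z).re := by
  classical
  set x : n → ℝ := fun i => (z i).re with hx
  set y : n → ℝ := fun i => (z i).im with hy
  have key : (star z ⬝ᵥ (M.map Complex.ofReal) *ᵥ z).re
      = x ⬝ᵥ M *ᵥ x + y ⬝ᵥ M *ᵥ y := by
    simp only [dotProduct, mulVec, Pi.star_apply, Complex.star_def, map_apply,
      Finset.mul_sum, Complex.re_sum]
    rw [← Finset.sum_add_distrib]
    refine Finset.sum_congr rfl fun i _ => ?_
    rw [← Finset.sum_add_distrib]
    refine Finset.sum_congr rfl fun j _ => ?_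
    simp [Complex.mul_re, Complex.mul_im, hx, hy]
  rw [key]
  have hxy : x ≠ 0 ∨ y ≠ 0 := by
    by_contra h
    push_neg at h
    apply hz
    funext i
    have h1 := congrFun h.1 i
    have h2 := congrFun h.2 i
    simpa using Complex.ext (by simpa using h1) (by simpa using h2)
  have hx0 : 0 ≤ x ⬝ᵥ M *ᵥ x := by simpa using hM.posSemidef.dotProduct_mulVec_nonneg x
  have hy0 : 0 ≤ y ⬝ᵥ M *ᵥ y := by simpa using hM.posSemidef.dotProduct_mulVec_nonneg y
  rcases hxy with h | h
  · have := hM.dotProduct_mulVec_pos h; simp only [star_trivial] at this; linarith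
  · have := hM.dotProduct_mulVec_pos h; simp only [star_trivial] at this; linarith

lemma star_sum_elim {n m : Type*} (x : n → ℂ) (y : m → ℂ) :
    star (Sum.elim x y) = Sum.elim (star x) (star y) := by
  funext i; cases i <;> rfl

lemma dp_transpose {n : Type*} [Fintype n] (M : Matrix n n ℝ) (v : n → ℂ) :
    star v ⬝ᵥ ((M.map Complex.ofReal)ᵀ *ᵥ v)
      = star (star v ⬝ᵥ ((M.map Complex.ofReal) *ᵥ v)) := by
  rw [star_dotProduct]
  congr 1
  rw [star_mulVec]
  have h : ((M.map Complex.ofReal)ᵀ)ᴴ = M.map Complex.ofReal := by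
    ext i j
    simp [conjTranspose_apply]
  rw [h, dotProduct_mulVec]


lemma isUnit_aux {N : ℕ} (E F P : Matrix (Fin N) (Fin N) ℝ)
    (hblk : (Matrix.fromBlocks (E + Eᵀ - P) Fᵀ F P).PosDef) : IsUnit E := by
  rw [Matrix.isUnit_iff_isUnit_det, isUnit_iff_ne_zero]
  intro hdet
  obtain ⟨v, hv0, hv⟩ := Matrix.exists_mulVec_eq_zero_iff.mpr hdet
  have h1 := hblk.dotProduct_mulVec_pos (x := Sum.elim v 0) (by simp [Function.ne_iff] at hv0 ⊢; tauto)
  have h2 := hblk.dotProduct_mulVec_pos (x := Sum.elim 0 v) (by simp [Function.ne_iff] at hv0 ⊢; tauto)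
  simp only [star_trivial, fromBlocks_mulVec, sumElim_dotProduct_sumElim,
    Sum.elim_comp_inl, Sum.elim_comp_inr,
    Matrix.mulVec_zero, add_zero, zero_add, dotProduct_zero, zero_dotProduct,
    Matrix.add_mulVec, Matrix.sub_mulVec, dotProduct_add, dotProduct_sub] at h1 h2
  have h3 : v ⬝ᵥ Eᵀ *ᵥ v = 0 := by
    rw [Matrix.mulVec_transpose, dotProduct_comm, ← Matrix.dotProduct_mulVec, hv,
      dotProduct_zero]
  rw [hv, h3] at h1
  simp at h1
  linarith

lemma schur_aux {N : ℕ} (E F P : Matrix (Fin N) (Fin N) ℝ)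
    (hblk : (Matrix.fromBlocks (E + Eᵀ - P) Fᵀ F P).PosDef)
    (hEunit : IsUnit E) (μ : ℂ)
    (hμ : μ ∈ spectrum ℂ ((E⁻¹ * F).map Complex.ofReal)) : ‖μ‖ < 1 := by
  classical
  -- eigenvector
  rw [spectrum.mem_iff, Matrix.isUnit_iff_isUnit_det, isUnit_iff_ne_zero, not_not] at hμ
  obtain ⟨v, hv0, hv⟩ := Matrix.exists_mulVec_eq_zero_iff.mpr hμ
  rw [Matrix.sub_mulVec, sub_eq_zero] at hv
  have heig : ((E⁻¹ * F).map Complex.ofReal) *ᵥ v = μ • v := by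
    rw [← hv, Algebra.algebraMap_eq_smul_one, Matrix.smul_mulVec, Matrix.one_mulVec]
  set Ec := E.map Complex.ofReal with hEc
  set Fc := F.map Complex.ofReal with hFc
  set Pc := P.map Complex.ofReal with hPc
  have hFv : Fc *ᵥ v = μ • (Ec *ᵥ v) := by
    have hEF : F = E * (E⁻¹ * F) := by
      rw [Matrix.mul_nonsing_inv_cancel_left _ _ ((Matrix.isUnit_iff_isUnit_det E).mp hEunit)]
    have hmap2 : (E * (E⁻¹ * F)).map Complex.ofReal
        = E.map Complex.ofReal * (E⁻¹ * F).map Complex.ofReal :=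
      Matrix.map_mul (f := Complex.ofRealHom)
    calc Fc *ᵥ v = (Ec * ((E⁻¹ * F).map Complex.ofReal)) *ᵥ v := by
          rw [hFc, hEc]; nth_rewrite 1 [hEF]; rw [hmap2]
      _ = Ec *ᵥ (((E⁻¹ * F).map Complex.ofReal) *ᵥ v) := by rw [Matrix.mulVec_mulVec]
      _ = μ • (Ec *ᵥ v) := by rw [heig, Matrix.mulVec_smul]
  -- the complexified block matrix
  have hS : (E + Eᵀ - P).map Complex.ofReal = Ec + Ecᵀ - Pc := by
    ext i j
    simp [map_apply, Matrix.add_apply, Matrix.sub_apply, hEc, hPc]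
  have hQ : (Matrix.fromBlocks (E + Eᵀ - P) Fᵀ F P).map Complex.ofReal
      = Matrix.fromBlocks (Ec + Ecᵀ - Pc) Fcᵀ Fc Pc := by
    rw [Matrix.fromBlocks_map, hS, Matrix.transpose_map]
  set a := star v ⬝ᵥ (Ec *ᵥ v) with ha
  set p := star v ⬝ᵥ (Pc *ᵥ v) with hp
  -- p has positive real part
  have hppos : 0 < p.re := by
    have h := re_quad_pos hblk (z := Sum.elim 0 v)
      (by simp [Function.ne_iff] at hv0 ⊢; tauto)
    rw [hQ] at h
    simpa [star_sum_elim, fromBlocks_mulVec, sumElim_dotProduct_sumElim] using h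
  by_cases hμ0 : μ = 0
  · simp [hμ0]
  -- main computation
  have hsμ : (starRingEnd ℂ) μ ≠ 0 := by simpa using hμ0
  set s : ℂ := -((starRingEnd ℂ) μ)⁻¹ with hs
  set z : (Fin N ⊕ Fin N) → ℂ := Sum.elim v (s • v) with hz
  have hzne : z ≠ 0 := by
    simp [hz, Function.ne_iff] at hv0 ⊢
    obtain ⟨i, hi⟩ := hv0
    exact Or.inl ⟨i, hi⟩
  have hmain := re_quad_pos hblk hzne
  rw [hQ] at hmain
  have hstar_s : star s = -μ⁻¹ := by
    rw [hs]
    simp [Complex.star_def, map_inv₀]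
  have hval : star z ⬝ᵥ (Matrix.fromBlocks (Ec + Ecᵀ - Pc) Fcᵀ Fc Pc) *ᵥ z
      = (star s * s - 1) * p := by
    rw [hz, star_sum_elim, fromBlocks_mulVec, sumElim_dotProduct_sumElim]
    simp only [Sum.elim_comp_inl, Sum.elim_comp_inr]
    simp only [Matrix.sub_mulVec, Matrix.add_mulVec, Matrix.mulVec_smul, dotProduct_add,
      dotProduct_sub, dotProduct_smul, star_smul, smul_dotProduct]
    rw [dp_transpose E v, dp_transpose F v]
    have h1 : star v ⬝ᵥ (Fc *ᵥ v) = μ * a := by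
      rw [hFv, dotProduct_smul, smul_eq_mul, ha]
    rw [h1]
    simp only [smul_eq_mul, ← ha, ← hp, hstar_s, star_mul', star_star, _root_.map_mul]
    rw [hs]
    have h2 : (μ:ℂ) ≠ 0 := hμ0
    field_simp
    rw [← hEc, ← ha]; simp only [Complex.star_def]
    ring
  rw [hval] at hmain
  have hss : star s * s - 1 = ((Complex.normSq μ)⁻¹ - 1 : ℝ) := by
    rw [hstar_s, hs, mul_neg, neg_mul, neg_neg, ← mul_inv, Complex.mul_conj]
    push_cast
    ring
  rw [hss] at hmain
  rw [Complex.re_ofReal_mul] at hmain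
  have hns : 0 < Complex.normSq μ := Complex.normSq_pos.mpr hμ0
  have h1 : (Complex.normSq μ)⁻¹ - 1 > 0 := by
    rcases lt_trichotomy ((Complex.normSq μ)⁻¹ - 1) 0 with h | h | h
    · nlinarith
    · rw [h] at hmain; simp at hmain
    · exact h
  have h2 : Complex.normSq μ < 1 := by
    have hinv : Complex.normSq μ * (Complex.normSq μ)⁻¹ = 1 := mul_inv_cancel₀ (ne_of_gt hns)
    nlinarith
  have h3 := Complex.sq_norm μ
  nlinarith [norm_nonneg μ]

theorem stmt8 {N : ℕ} (E F P : Matrix (Fin N) (Fin N) ℝ)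
    (hblk : (Matrix.fromBlocks (E + Eᵀ - P) Fᵀ F P).PosDef) :
    IsUnit E ∧ SchurStable (E⁻¹ * F) := by
  have hE := isUnit_aux E F P hblk
  exact ⟨hE, fun μ hμ => schur_aux E F P hblk hE μ hμ⟩
end

section
/- Let f_c : ℝⁿ × ℝᵐ → ℝⁿ be C¹ and let φ : ℝⁿ → ℝᴺ be a C¹ map whose Jacobian Dφ(x) ∈ ℝ^{N×n} has full column rank n for every x, with constants a₂ ≥ a₁ > 0 such that a₁ I ≼ Dφ(x)ᵀ Dφ(x) ≼ a₂ I for all x. Suppose A ∈ ℝ^{N×N} and B ∈ ℝ^{N×m} satisfy φ(f_c(x, v)) = A φ(x) + B v for all x ∈ ℝⁿ and v ∈ ℝᵐ, and let K ∈ ℝ^{m×N} be any matrix such that A + B K is Schur stable. Then the closed-loop map g(x) := f_c(x, K φ(x)) is contracting: there exist a symmetric positive definite P ∈ ℝ^{N×N} and β ∈ (0,1) such that, with M(x) := Dφ(x)ᵀ P Dφ(x), Dg(x)ᵀ M(g(x)) Dg(x) − M(x) ≼ −β M(x) for all x ∈ ℝⁿ. -/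
open Matrix

section Aux

attribute [local instance] Matrix.frobeniusNormedAddCommGroup Matrix.frobeniusNormedRing
  Matrix.frobeniusNormedAlgebra

/-- Schur stability yields a power with small Frobenius norm. -/
lemma aux_schur_pow {N : ℕ} (A : Matrix (Fin N) (Fin N) ℝ) (hA : SchurStable A) :
    ∃ k : ℕ, 0 < k ∧ (∑ i, ∑ j, ((A ^ k) i j) ^ 2) < 1 := by
  rcases Nat.eq_zero_or_pos N with hN | hN
  · subst hN
    exact ⟨1, one_pos, by simp⟩
  have : Nonempty (Fin N) := ⟨⟨0, hN⟩⟩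
  have hc : CompleteSpace (Matrix (Fin N) (Fin N) ℂ) := FiniteDimensional.complete ℂ _
  set Ac := A.map Complex.ofReal with hAc
  have hρ : spectralRadius ℂ Ac < 1 := by
    have := spectrum.spectralRadius_lt_of_forall_lt Ac (r := 1)
      (fun z hz => by simpa [← NNReal.coe_lt_one] using hA z hz)
    simpa using this
  have hten := spectrum.pow_nnnorm_pow_one_div_tendsto_nhds_spectralRadius Ac
  have hev : ∀ᶠ k : ℕ in Filter.atTop, (‖Ac ^ k‖₊ : ENNReal) ^ (1 / (k:ℝ)) < 1 :=
    hten.eventually_lt_const (by simpa using hρ)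
  obtain ⟨k, hk, hk1⟩ := (hev.and (Filter.eventually_ge_atTop 1)).exists
  refine ⟨k, hk1, ?_⟩
  have hmap : Ac ^ k = (A ^ k).map Complex.ofReal := by
    show (Complex.ofRealHom.mapMatrix A) ^ k = Complex.ofRealHom.mapMatrix (A ^ k)
    rw [map_pow]
  have hnn : ‖Ac ^ k‖₊ = ‖A ^ k‖₊ := by
    rw [hmap]
    exact Matrix.frobenius_nnnorm_map_eq _ _ (fun a => Complex.nnnorm_real a)
  have hlt : ‖A ^ k‖ < 1 := by
    rw [hnn] at hk
    by_contra hcn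
    push_neg at hcn
    have h1 : (1:ENNReal) ≤ (‖A ^ k‖₊ : ENNReal) := by
      rw [ENNReal.one_le_coe_iff]; exact_mod_cast hcn
    have := ENNReal.rpow_le_rpow h1 (by positivity : (0:ℝ) ≤ 1 / (k:ℝ))
    rw [ENNReal.one_rpow] at this
    exact absurd (this.trans_lt hk) (lt_irrefl _)
  have hsq : (∑ i, ∑ j, ((A ^ k) i j) ^ 2) = ‖A ^ k‖ ^ 2 := by
    rw [Matrix.frobenius_norm_def]
    rw [← Real.rpow_natCast _ 2, ← Real.rpow_mul (by positivity)]
    norm_num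
  rw [hsq]
  nlinarith [norm_nonneg (A ^ k)]

end Aux

/-- Quadratic form bound by the (squared) Frobenius norm. -/
lemma aux_fro2_psd {N n : ℕ} (M : Matrix (Fin N) (Fin n) ℝ) {c : ℝ}
    (h : ∑ i, ∑ j, (M i j) ^ 2 ≤ c) :
    (c • (1 : Matrix (Fin n) (Fin n) ℝ) - Mᵀ * M).PosSemidef := by
  refine Matrix.posSemidef_iff_dotProduct_mulVec.mpr ⟨?_, ?_⟩
  · have h1 : (Mᵀ * M).IsHermitian := by
      have := Matrix.isHermitian_conjTranspose_mul_self M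
      rwa [Matrix.conjTranspose_eq_transpose_of_trivial] at this
    have h2 : (c • (1 : Matrix (Fin n) (Fin n) ℝ)).IsHermitian := by
      simp [Matrix.IsHermitian, Matrix.conjTranspose_smul]
    exact h2.sub h1
  · intro x
    have hquad : star x ⬝ᵥ ((c • (1 : Matrix (Fin n) (Fin n) ℝ) - Mᵀ * M).mulVec x)
        = c * (x ⬝ᵥ x) - (M.mulVec x) ⬝ᵥ (M.mulVec x) := by
      rw [Matrix.sub_mulVec, dotProduct_sub, Matrix.smul_mulVec, Matrix.one_mulVec,
        dotProduct_smul, ← Matrix.mulVec_mulVec, Matrix.dotProduct_mulVec,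
        Matrix.vecMul_transpose]
      simp [star_trivial, smul_eq_mul]
    rw [hquad]
    have key : (M.mulVec x) ⬝ᵥ (M.mulVec x) ≤ (∑ i, ∑ j, (M i j) ^ 2) * (x ⬝ᵥ x) := by
      simp only [Matrix.mulVec, dotProduct]
      calc ∑ i, (∑ j, M i j * x j) * (∑ j, M i j * x j)
          = ∑ i, (∑ j, M i j * x j) ^ 2 := by simp [sq]
        _ ≤ ∑ i, (∑ j, (M i j) ^ 2) * (∑ j, (x j) ^ 2) := by
            refine Finset.sum_le_sum fun i _ => ?_
            exact Finset.sum_mul_sq_le_sq_mul_sq Finset.univ (fun j => M i j) x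
        _ = (∑ i, ∑ j, (M i j) ^ 2) * (∑ j, x j * x j) := by
            rw [Finset.sum_mul]; simp [sq]
    have hxx : 0 ≤ x ⬝ᵥ x := by
      simp only [dotProduct]
      exact Finset.sum_nonneg fun i _ => mul_self_nonneg _
    nlinarith [key, hxx, mul_le_mul_of_nonneg_right h hxx]

lemma aux_smul_psd {p : ℕ} {t : ℝ} (ht : 0 ≤ t) {M : Matrix (Fin p) (Fin p) ℝ}
    (hM : M.PosSemidef) : (t • M).PosSemidef := by
  refine Matrix.posSemidef_iff_dotProduct_mulVec.mpr ⟨?_, ?_⟩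
  · simpa [Matrix.IsHermitian, Matrix.conjTranspose_smul] using congrArg (t • ·) hM.1
  · intro x
    have := hM.dotProduct_mulVec_nonneg x
    rw [Matrix.smul_mulVec, dotProduct_smul]
    exact mul_nonneg ht this

lemma aux_sum_psd {p : ℕ} {ι : Type*} (s : Finset ι) (f : ι → Matrix (Fin p) (Fin p) ℝ)
    (h : ∀ i ∈ s, (f i).PosSemidef) : (∑ i ∈ s, f i).PosSemidef :=
  Finset.sum_induction f _ (fun _ _ ha hb => ha.add hb) Matrix.PosSemidef.zero h

lemma aux_tr_psd {p : ℕ} (M : Matrix (Fin p) (Fin p) ℝ) : (Mᵀ * M).PosSemidef := by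
  have := Matrix.posSemidef_conjTranspose_mul_self M
  rwa [Matrix.conjTranspose_eq_transpose_of_trivial] at this

lemma jac_comp {n m p : ℕ} (f : (Fin m → ℝ) → (Fin p → ℝ)) (g : (Fin n → ℝ) → (Fin m → ℝ))
    (x : Fin n → ℝ) (hf : DifferentiableAt ℝ f (g x)) (hg : DifferentiableAt ℝ g x) :
    jac (fun y => f (g y)) x = jac f (g x) * jac g x := by
  unfold jac
  rw [show (fun y => f (g y)) = f ∘ g from rfl, fderiv_comp x hf hg]
  rw [ContinuousLinearMap.toLinearMap_comp, LinearMap.toMatrix'_comp]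

lemma jac_mulVec {n N M : ℕ} (S : Matrix (Fin M) (Fin N) ℝ) (φ : (Fin n → ℝ) → (Fin N → ℝ))
    (x : Fin n → ℝ) (hφ : DifferentiableAt ℝ φ x) :
    jac (fun y => S.mulVec (φ y)) x = S * jac φ x := by
  have hS : DifferentiableAt ℝ (fun v => S.mulVec v) (φ x) :=
    (LinearMap.toContinuousLinearMap S.mulVecLin).differentiableAt
  rw [jac_comp _ _ _ hS hφ]
  congr 1
  unfold jac
  have : (fun v => S.mulVec v) = ⇑(LinearMap.toContinuousLinearMap S.mulVecLin) := by
    ext v i; simp [Matrix.mulVecLin_apply]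
  rw [this, ContinuousLinearMap.fderiv]
  have h2 : (LinearMap.toContinuousLinearMap S.mulVecLin).toLinearMap = S.mulVecLin := rfl
  rw [h2]
  ext i j
  simp [LinearMap.toMatrix'_apply, Matrix.mulVecLin_apply, Matrix.mulVec, dotProduct,
    ite_eq_ite, mul_ite, Finset.sum_ite_eq', Pi.single_apply]

theorem stmt12 {n m N : ℕ}
    (fc : (Fin n → ℝ) → (Fin m → ℝ) → (Fin n → ℝ))
    (hfc : ContDiff ℝ 1 (fun p : (Fin n → ℝ) × (Fin m → ℝ) => fc p.1 p.2))
    (φ : (Fin n → ℝ) → (Fin N → ℝ)) (hφ : ContDiff ℝ 1 φ)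
    (hrank : ∀ x, (jac φ x).rank = n)
    (a₁ a₂ : ℝ) (ha₁ : 0 < a₁) (ha₁₂ : a₁ ≤ a₂)
    (hlow : ∀ x, ((jac φ x)ᵀ * jac φ x - a₁ • (1 : Matrix (Fin n) (Fin n) ℝ)).PosSemidef)
    (hup : ∀ x, (a₂ • (1 : Matrix (Fin n) (Fin n) ℝ) - (jac φ x)ᵀ * jac φ x).PosSemidef)
    (A : Matrix (Fin N) (Fin N) ℝ) (B : Matrix (Fin N) (Fin m) ℝ)
    (hlift : ∀ x v, φ (fc x v) = A.mulVec (φ x) + B.mulVec v)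
    (K : Matrix (Fin m) (Fin N) ℝ) (hK : SchurStable (A + B * K)) :
    ∃ (P : Matrix (Fin N) (Fin N) ℝ) (β : ℝ), P.PosDef ∧ 0 < β ∧ β < 1 ∧
      ∀ x, ((1 - β) • ((jac φ x)ᵀ * P * jac φ x)
          - (jac (fun y => fc y (K.mulVec (φ y))) x)ᵀ *
              ((jac φ (fc x (K.mulVec (φ x))))ᵀ * P * jac φ (fc x (K.mulVec (φ x)))) *
              jac (fun y => fc y (K.mulVec (φ y))) x).PosSemidef := by
  set S := A + B * K with hS
  obtain ⟨k₀, hk₀, hs⟩ := aux_schur_pow S hK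
  set f : ℕ → Matrix (Fin N) (Fin N) ℝ := fun i => (S ^ i)ᵀ * (S ^ i) with hf
  set s : ℝ := ∑ i, ∑ j, ((S ^ k₀) i j) ^ 2 with hsdef
  have hs0 : 0 ≤ s := Finset.sum_nonneg fun i _ => Finset.sum_nonneg fun j _ => sq_nonneg _
  set P : Matrix (Fin N) (Fin N) ℝ := ∑ i ∈ Finset.range k₀, f i with hP
  set c : ℝ := (∑ i ∈ Finset.range k₀, ∑ a, ∑ b, ((S ^ i) a b) ^ 2) + 1 with hc
  have hc0 : 0 < c := by
    have : (0:ℝ) ≤ ∑ i ∈ Finset.range k₀, ∑ a, ∑ b, ((S ^ i) a b) ^ 2 :=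
      Finset.sum_nonneg fun i _ => Finset.sum_nonneg fun a _ =>
        Finset.sum_nonneg fun b _ => sq_nonneg _
    linarith
  set β : ℝ := min ((1 - s) / c) (1 / 2) with hβ
  have hβ0 : 0 < β := lt_min (div_pos (by linarith) hc0) (by norm_num)
  have hβ1 : β < 1 := lt_of_le_of_lt (min_le_right _ _) (by norm_num)
  have hβc : β * c ≤ 1 - s := by
    have := min_le_left ((1 - s) / c) (1 / 2)
    calc β * c ≤ ((1 - s) / c) * c := by nlinarith
      _ = 1 - s := by field_simp
  -- P is positive definite
  have hfpsd : ∀ i, (f i).PosSemidef := fun i => aux_tr_psd (S ^ i)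
  have hPpd : P.PosDef := by
    obtain ⟨k', hk'⟩ : ∃ k', k₀ = k' + 1 := ⟨k₀ - 1, by omega⟩
    rw [hP, hk', Finset.sum_range_succ' f k']
    have hf0 : f 0 = 1 := by simp [hf]
    rw [hf0]
    exact Matrix.PosDef.posSemidef_add (aux_sum_psd _ _ (fun i _ => hfpsd (i + 1))) Matrix.PosDef.one
  -- the discrete Lyapunov identity
  have hSPS : Sᵀ * P * S = P + f k₀ - 1 := by
    have h1 : Sᵀ * P * S = ∑ i ∈ Finset.range k₀, f (i + 1) := by
      rw [hP, Finset.mul_sum, Finset.sum_mul]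
      refine Finset.sum_congr rfl fun i _ => ?_
      simp only [hf, pow_succ, Matrix.transpose_mul, Matrix.mul_assoc]
    have h2 : ∑ i ∈ Finset.range k₀, f (i + 1) + f 0 = P + f k₀ := by
      rw [← Finset.sum_range_succ' f k₀, Finset.sum_range_succ f k₀, hP]
    have hf0 : f 0 = 1 := by simp [hf]
    rw [h1]
    rw [hf0] at h2
    linear_combination (norm := abel) h2
  -- key positive semidefiniteness
  have hkey : ((1 - β) • P - Sᵀ * P * S).PosSemidef := by
    have hdecomp : (1 - β) • P - Sᵀ * P * S
        = (s • 1 - f k₀) + (((1 - s) - β * c) • (1 : Matrix (Fin N) (Fin N) ℝ)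
            + β • (c • (1 : Matrix (Fin N) (Fin N) ℝ) - P)) := by
      rw [hSPS]
      module
    rw [hdecomp]
    have hpsd1 : (s • (1 : Matrix (Fin N) (Fin N) ℝ) - f k₀).PosSemidef :=
      aux_fro2_psd (S ^ k₀) (le_of_eq rfl)
    have hpsd2 : (((1 - s) - β * c) • (1 : Matrix (Fin N) (Fin N) ℝ)).PosSemidef :=
      aux_smul_psd (by linarith) Matrix.PosSemidef.one
    have hpsd3 : (c • (1 : Matrix (Fin N) (Fin N) ℝ) - P).PosSemidef := by
      have hsum : c • (1 : Matrix (Fin N) (Fin N) ℝ) - P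
          = (∑ i ∈ Finset.range k₀,
              ((∑ a, ∑ b, ((S ^ i) a b) ^ 2) • (1 : Matrix (Fin N) (Fin N) ℝ) - f i)) + 1 := by
        rw [Finset.sum_sub_distrib, ← Finset.sum_smul, hP, hc, add_smul, one_smul]
        abel
      rw [hsum]
      refine (aux_sum_psd _ _ fun i _ => ?_).add Matrix.PosSemidef.one
      exact aux_fro2_psd (S ^ i) (le_of_eq rfl)
    exact hpsd1.add (hpsd2.add (aux_smul_psd hβ0.le hpsd3))
  refine ⟨P, β, hPpd, hβ0, hβ1, fun x => ?_⟩
  -- differentiability of the closed loop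
  have hφd : Differentiable ℝ φ := hφ.differentiable (by norm_num)
  set g : (Fin n → ℝ) → (Fin n → ℝ) := fun y => fc y (K.mulVec (φ y)) with hg
  have hKd : Differentiable ℝ (fun v : Fin N → ℝ => K.mulVec v) :=
    (LinearMap.toContinuousLinearMap K.mulVecLin).differentiable
  have hgd : Differentiable ℝ g := by
    have h1 : Differentiable ℝ (fun y : Fin n → ℝ => (y, K.mulVec (φ y))) :=
      differentiable_id.prodMk (hKd.comp hφd)
    exact (hfc.differentiable (by norm_num)).comp h1
  have hφg : (fun y => φ (g y)) = fun y => S.mulVec (φ y) := by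
    funext y
    rw [hg]
    simp only
    rw [hlift, hS, Matrix.add_mulVec, Matrix.mulVec_mulVec]
  have hchain : jac φ (g x) * jac g x = S * jac φ x := by
    rw [← jac_comp φ g x (hφd (g x)) (hgd x), hφg]
    exact jac_mulVec S φ x (hφd x)
  -- rewrite the target matrix as a congruence
  have htarget : (1 - β) • ((jac φ x)ᵀ * P * jac φ x)
      - (jac (fun y => fc y (K.mulVec (φ y))) x)ᵀ *
          ((jac φ (fc x (K.mulVec (φ x))))ᵀ * P * jac φ (fc x (K.mulVec (φ x)))) *
          jac (fun y => fc y (K.mulVec (φ y))) x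
      = (jac φ x)ᵀ * ((1 - β) • P - Sᵀ * P * S) * jac φ x := by
    have hgx : fc x (K.mulVec (φ x)) = g x := rfl
    have hgfun : (fun y => fc y (K.mulVec (φ y))) = g := rfl
    rw [hgx, hgfun]
    have h1 : (jac g x)ᵀ * ((jac φ (g x))ᵀ * P * jac φ (g x)) * jac g x
        = (jac φ (g x) * jac g x)ᵀ * P * (jac φ (g x) * jac g x) := by
      rw [Matrix.transpose_mul]
      simp only [Matrix.mul_assoc]
    rw [h1, hchain, Matrix.transpose_mul]
    rw [Matrix.mul_sub, Matrix.sub_mul, Matrix.mul_smul, Matrix.smul_mul]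
    simp only [Matrix.mul_assoc]
  rw [htarget]
  have := hkey.conjTranspose_mul_mul_same (jac φ x)
  rwa [Matrix.conjTranspose_eq_transpose_of_trivial] at this
end

section
/- Let B ∈ ℝ^{N×m} with rank(B) = m and let B⊥ ∈ ℝ^{(N−m)×N} be a full-row-rank matrix with B⊥ B = 0. Let L ∈ ℝ^{2N×2N}, R ∈ ℝ^{N×N}, S ∈ ℝ^{m×N}, and ε > 0, and set M := L Lᵀ + ε I with N×N blocks M₁₁, M₁₂, M₂₁, M₂₂. Then the N×N matrix obtained by stacking B⊥ on top of Bᵀ is invertible, M₁₁ + M₂₂ + R − Rᵀ is invertible, and the matrix A := [B⊥; Bᵀ]⁻¹ · [2 B⊥ (M₁₁ + M₂₂ + R − Rᵀ)⁻¹ M₂₁; S] has the property that the pair (A, B) is stabilizable, i.e., there exists K ∈ ℝ^{m×N} such that A + B K is Schur stable. -/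
open Matrix

/-- The `N × N` matrix obtained by stacking an `(N-m) × N` matrix on top of an `m × N` matrix
(rows reindexed to `Fin N`), assuming `m ≤ N`. -/
noncomputable def stackRows {N m : ℕ} (h : m ≤ N)
    (X : Matrix (Fin (N - m)) (Fin N) ℝ) (Y : Matrix (Fin m) (Fin N) ℝ) :
    Matrix (Fin N) (Fin N) ℝ :=
  (Matrix.fromRows X Y).submatrix
    ((finCongr (Nat.sub_add_cancel h).symm).trans finSumFinEquiv.symm) id

namespace Stmt13Aux

set_option linter.unusedSectionVars false

/-- A full-rank square real matrix is a unit. -/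
lemma isUnit_of_rank_eq {k : ℕ} (A : Matrix (Fin k) (Fin k) ℝ) (h : A.rank = k) :
    IsUnit A := by
  have htop : LinearMap.range A.mulVecLin = ⊤ := by
    apply Submodule.eq_top_of_finrank_eq
    rw [← Matrix.rank, h, Module.finrank_fintype_fun_eq_card, Fintype.card_fin]
  have hsurj : Function.Surjective A.mulVecLin := LinearMap.range_eq_top.mp htop
  have hinj : Function.Injective A.mulVecLin :=
    (LinearMap.injective_iff_surjective).mpr hsurj
  exact Matrix.mulVec_injective_iff_isUnit.mp (by exact hinj)

/-- Complexified sesquilinear form of a real matrix. -/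
noncomputable def cq {k l : Type*} [Fintype k] [Fintype l]
    (A : Matrix k l ℝ) (x : k → ℂ) (y : l → ℂ) : ℂ :=
  star x ⬝ᵥ (A.map Complex.ofReal) *ᵥ y

variable {k l : Type*} [Fintype k] [Fintype l]

lemma cmap_conjTranspose (A : Matrix k l ℝ) :
    (A.map Complex.ofReal)ᴴ = Aᵀ.map Complex.ofReal := by
  ext i j
  simp [Matrix.conjTranspose_apply, Complex.conj_ofReal]

lemma cq_transpose (A : Matrix k l ℝ) (x : k → ℂ) (y : l → ℂ) :
    cq Aᵀ y x = (starRingEnd ℂ) (cq A x y) := by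
  unfold cq
  rw [show (Aᵀ.map Complex.ofReal) = (A.map Complex.ofReal)ᴴ from (cmap_conjTranspose A).symm]
  rw [Matrix.dotProduct_mulVec, ← Matrix.star_mulVec, Matrix.star_dotProduct]
  simp

lemma cmap_add (A B : Matrix k l ℝ) :
    (A + B).map Complex.ofReal = A.map Complex.ofReal + B.map Complex.ofReal := by
  ext i j; simp

lemma cq_add_left (A B : Matrix k l ℝ) (x : k → ℂ) (y : l → ℂ) :
    cq (A + B) x y = cq A x y + cq B x y := by
  unfold cq
  rw [cmap_add, Matrix.add_mulVec, dotProduct_add]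

lemma cq_sub_left (A B : Matrix k l ℝ) (x : k → ℂ) (y : l → ℂ) :
    cq (A - B) x y = cq A x y - cq B x y := by
  unfold cq
  have : (A - B).map Complex.ofReal = A.map Complex.ofReal - B.map Complex.ofReal := by
    ext i j; simp
  rw [this, Matrix.sub_mulVec, dotProduct_sub]

lemma cq_smul_right (A : Matrix k l ℝ) (x : k → ℂ) (y : l → ℂ) (θ : ℂ) :
    cq A x (θ • y) = θ * cq A x y := by
  unfold cq
  rw [Matrix.mulVec_smul, dotProduct_smul, smul_eq_mul]

lemma cq_smul_left (A : Matrix k l ℝ) (x : k → ℂ) (y : l → ℂ) (θ : ℂ) :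
    cq A (θ • x) y = (starRingEnd ℂ) θ * cq A x y := by
  unfold cq
  rw [star_smul, smul_dotProduct]
  simp [smul_eq_mul]

lemma cq_add_vec_left (A : Matrix k l ℝ) (x x' : k → ℂ) (y : l → ℂ) :
    cq A (x + x') y = cq A x y + cq A x' y := by
  unfold cq
  rw [star_add, add_dotProduct]

lemma cq_add_vec_right (A : Matrix k l ℝ) (x : k → ℂ) (y y' : l → ℂ) :
    cq A x (y + y') = cq A x y + cq A x y' := by
  unfold cq
  rw [Matrix.mulVec_add, dotProduct_add]

/-- Real vectors viewed inside ℂ. -/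
def ofR {k : Type*} (u : k → ℝ) : k → ℂ := fun i => (u i : ℂ)

lemma cq_ofR (A : Matrix k l ℝ) (u : k → ℝ) (w : l → ℝ) :
    cq A (ofR u) (ofR w) = ((u ⬝ᵥ A *ᵥ w : ℝ) : ℂ) := by
  unfold cq ofR
  have h1 : star (fun i => ((u i : ℝ) : ℂ)) = fun i => ((u i : ℝ) : ℂ) := by
    funext i; simp [Complex.conj_ofReal]
  have h2 : (A.map Complex.ofReal) *ᵥ (fun i => ((w i : ℝ) : ℂ))
      = fun i => (((A *ᵥ w) i : ℝ) : ℂ) := by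
    funext i
    rw [show (fun i => ((w i : ℝ) : ℂ)) = (Complex.ofRealHom : ℝ →+* ℂ) ∘ w from rfl]
    rw [show (A.map Complex.ofReal) = A.map (Complex.ofRealHom : ℝ →+* ℂ) from rfl]
    exact (RingHom.map_mulVec Complex.ofRealHom A w i).symm
  rw [h1, h2]
  rw [show (fun i => ((u i : ℝ) : ℂ)) = (Complex.ofRealHom : ℝ →+* ℂ) ∘ u from rfl]
  rw [show (fun i => (((A *ᵥ w) i : ℝ) : ℂ)) = (Complex.ofRealHom : ℝ →+* ℂ) ∘ (A *ᵥ w) from rfl]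
  exact (RingHom.map_dotProduct Complex.ofRealHom u (A *ᵥ w)).symm

lemma cq_self_re (A : Matrix k k ℝ) (x : k → ℂ) :
    (cq A x x).re = (fun i => (x i).re) ⬝ᵥ A *ᵥ (fun i => (x i).re)
      + (fun i => (x i).im) ⬝ᵥ A *ᵥ (fun i => (x i).im) := by
  set a : k → ℝ := fun i => (x i).re with ha
  set b : k → ℝ := fun i => (x i).im with hb
  have hx : x = ofR a + Complex.I • ofR b := by
    funext i
    simp only [ofR, Pi.add_apply, Pi.smul_apply, smul_eq_mul, ha, hb]
    rw [mul_comm, Complex.re_add_im]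
  rw [hx, cq_add_vec_left, cq_add_vec_right, cq_add_vec_right, cq_smul_left, cq_smul_right,
    cq_smul_left, cq_smul_right, cq_ofR, cq_ofR, cq_ofR, cq_ofR]
  simp [Complex.ext_iff]

lemma re_cq_self_pos {A : Matrix k k ℝ} (hA : A.PosDef) {x : k → ℂ} (hx : x ≠ 0) :
    0 < (cq A x x).re := by
  rw [cq_self_re]
  set a : k → ℝ := fun i => (x i).re with ha
  set b : k → ℝ := fun i => (x i).im with hb
  have hab : a ≠ 0 ∨ b ≠ 0 := by
    by_contra h
    push_neg at h
    apply hx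
    funext i
    have h1 : (x i).re = 0 := congrFun h.1 i
    have h2 : (x i).im = 0 := congrFun h.2 i
    simp [Complex.ext_iff, h1, h2]
  have key : ∀ u : k → ℝ, 0 ≤ u ⬝ᵥ A *ᵥ u := by
    intro u
    simpa using hA.posSemidef.dotProduct_mulVec_nonneg u
  have keypos : ∀ u : k → ℝ, u ≠ 0 → 0 < u ⬝ᵥ A *ᵥ u := by
    intro u hu
    simpa using hA.dotProduct_mulVec_pos hu
  rcases hab with h | h
  · exact add_pos_of_pos_of_nonneg (keypos a h) (key b)
  · exact add_pos_of_nonneg_of_pos (key a) (keypos b h)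

lemma cq_block (M : Matrix (k ⊕ l) (k ⊕ l) ℝ) (x₁ y₁ : k → ℂ) (x₂ y₂ : l → ℂ) :
    cq M (Sum.elim x₁ x₂) (Sum.elim y₁ y₂) =
      cq M.toBlocks₁₁ x₁ y₁ + cq M.toBlocks₁₂ x₁ y₂ +
      cq M.toBlocks₂₁ x₂ y₁ + cq M.toBlocks₂₂ x₂ y₂ := by
  unfold cq
  rw [← Matrix.fromBlocks_toBlocks M, Matrix.fromBlocks_map]
  rw [Matrix.fromBlocks_mulVec]
  rw [show star (Sum.elim x₁ x₂) = Sum.elim (star x₁) (star x₂) from Function.star_sumElim x₁ x₂]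
  rw [sumElim_dotProduct_sumElim, dotProduct_add, dotProduct_add]
  simp only [Matrix.toBlocks_fromBlocks₁₁, Matrix.toBlocks_fromBlocks₁₂,
    Matrix.toBlocks_fromBlocks₂₁, Matrix.toBlocks_fromBlocks₂₂,
    Sum.elim_comp_inl, Sum.elim_comp_inr]
  ring

lemma posDef_toBlocks₁₁ {M : Matrix (k ⊕ l) (k ⊕ l) ℝ} (hM : M.PosDef) :
    M.toBlocks₁₁.PosDef := by
  rw [Matrix.posDef_iff_dotProduct_mulVec]
  constructor
  · ext i j
    have := congrFun (congrFun hM.1 (Sum.inl i)) (Sum.inl j)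
    simpa [Matrix.conjTranspose_apply, Matrix.toBlocks₁₁] using this
  · intro x hx
    have hy : (Sum.elim x 0 : k ⊕ l → ℝ) ≠ 0 := by
      intro h
      exact hx (funext fun i => congrFun h (Sum.inl i))
    have := hM.dotProduct_mulVec_pos hy
    rw [← Matrix.fromBlocks_toBlocks M, Matrix.fromBlocks_mulVec] at this
    simpa [Function.star_sumElim, sumElim_dotProduct_sumElim] using this

lemma posDef_toBlocks₂₂ {M : Matrix (k ⊕ l) (k ⊕ l) ℝ} (hM : M.PosDef) :
    M.toBlocks₂₂.PosDef := by
  rw [Matrix.posDef_iff_dotProduct_mulVec]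
  constructor
  · ext i j
    have := congrFun (congrFun hM.1 (Sum.inr i)) (Sum.inr j)
    simpa [Matrix.conjTranspose_apply, Matrix.toBlocks₂₂] using this
  · intro x hx
    have hy : (Sum.elim 0 x : k ⊕ l → ℝ) ≠ 0 := by
      intro h
      exact hx (funext fun i => congrFun h (Sum.inr i))
    have := hM.dotProduct_mulVec_pos hy
    rw [← Matrix.fromBlocks_toBlocks M, Matrix.fromBlocks_mulVec] at this
    simpa [Function.star_sumElim, sumElim_dotProduct_sumElim] using this

lemma exists_eigenvector {n : ℕ} (T : Matrix (Fin n) (Fin n) ℝ) {μ : ℂ}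
    (hμ : μ ∈ spectrum ℂ (T.map Complex.ofReal)) :
    ∃ v : Fin n → ℂ, v ≠ 0 ∧ (T.map Complex.ofReal) *ᵥ v = μ • v := by
  set Tc := T.map Complex.ofReal
  have h1 : ¬IsUnit (algebraMap ℂ (Matrix (Fin n) (Fin n) ℂ) μ - Tc) := spectrum.mem_iff.mp hμ
  have h2 : (algebraMap ℂ (Matrix (Fin n) (Fin n) ℂ) μ - Tc).det = 0 := by
    by_contra h
    exact h1 ((Matrix.isUnit_iff_isUnit_det _).mpr (isUnit_iff_ne_zero.mpr h))
  obtain ⟨v, hv0, hv⟩ := (Matrix.exists_mulVec_eq_zero_iff).mpr h2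
  refine ⟨v, hv0, ?_⟩
  rw [Matrix.sub_mulVec] at hv
  have : (algebraMap ℂ (Matrix (Fin n) (Fin n) ℂ) μ) *ᵥ v = μ • v := by
    rw [Algebra.algebraMap_eq_smul_one, Matrix.smul_mulVec, Matrix.one_mulVec]
  rw [this] at hv
  exact (sub_eq_zero.mp hv).symm

lemma stackRows_mul {N m : ℕ} (h : m ≤ N) (X : Matrix (Fin (N - m)) (Fin N) ℝ)
    (Y : Matrix (Fin m) (Fin N) ℝ) (Z : Matrix (Fin N) (Fin N) ℝ) :
    stackRows h X Y * Z = stackRows h (X * Z) (Y * Z) := by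
  unfold stackRows
  rw [show Z = Z.submatrix (id : Fin N → Fin N) (id : Fin N → Fin N) from rfl]
  rw [← Matrix.submatrix_mul _ _ _ id _ Function.bijective_id]
  rw [Matrix.fromRows_mul]
  simp

lemma stackRows_add {N m : ℕ} (h : m ≤ N) (X X' : Matrix (Fin (N - m)) (Fin N) ℝ)
    (Y Y' : Matrix (Fin m) (Fin N) ℝ) :
    stackRows h X Y + stackRows h X' Y' = stackRows h (X + X') (Y + Y') := by
  unfold stackRows
  have : Matrix.fromRows X Y + Matrix.fromRows X' Y' = Matrix.fromRows (X + X') (Y + Y') := by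
    ext i j
    cases i <;> simp
  rw [← this]
  rfl

lemma isUnit_stackRows {N m : ℕ} (hm : m ≤ N)
    (B : Matrix (Fin N) (Fin m) ℝ) (hB : B.rank = m)
    (Bp : Matrix (Fin (N - m)) (Fin N) ℝ) (hBp : Bp.rank = N - m)
    (hann : Bp * B = 0) : IsUnit (stackRows hm Bp Bᵀ) := by
  set e := (finCongr (Nat.sub_add_cancel hm).symm).trans finSumFinEquiv.symm with he
  have hPPt : stackRows hm Bp Bᵀ * (stackRows hm Bp Bᵀ)ᵀ =
      (Matrix.fromBlocks (Bp * Bpᵀ) 0 0 (Bᵀ * B)).submatrix e e := by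
    unfold stackRows
    rw [Matrix.transpose_submatrix]
    rw [show ((Matrix.fromRows Bp Bᵀ).submatrix e id) * ((Matrix.fromRows Bp Bᵀ)ᵀ.submatrix id e)
        = (Matrix.fromRows Bp Bᵀ * (Matrix.fromRows Bp Bᵀ)ᵀ).submatrix e e from
      (Matrix.submatrix_mul _ _ e id e Function.bijective_id).symm]
    congr 1
    have hz2 : Bᵀ * Bpᵀ = 0 := by
      calc Bᵀ * Bpᵀ = (Bp * B)ᵀ := (Matrix.transpose_mul Bp B).symm
        _ = 0 := by rw [hann]; exact Matrix.transpose_zero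
    rw [Matrix.transpose_fromRows, Matrix.fromRows_mul_fromCols,
      Matrix.transpose_transpose, hann, hz2]
  have h1 : IsUnit (Bp * Bpᵀ) := by
    apply isUnit_of_rank_eq
    rw [Matrix.rank_self_mul_transpose, hBp]
  have h2 : IsUnit (Bᵀ * B) := by
    apply isUnit_of_rank_eq
    rw [Matrix.rank_transpose_mul_self, hB]
  have hdet : IsUnit (stackRows hm Bp Bᵀ * (stackRows hm Bp Bᵀ)ᵀ).det := by
    rw [hPPt, Matrix.det_submatrix_equiv_self, Matrix.det_fromBlocks_zero₂₁]
    exact ((Matrix.isUnit_iff_isUnit_det _).mp h1).mul ((Matrix.isUnit_iff_isUnit_det _).mp h2)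
  rw [Matrix.det_mul] at hdet
  exact (Matrix.isUnit_iff_isUnit_det _).mpr (isUnit_of_mul_isUnit_left hdet)

end Stmt13Aux

theorem stmt13 {N m : ℕ} (hm : m ≤ N)
    (B : Matrix (Fin N) (Fin m) ℝ) (hB : B.rank = m)
    (Bp : Matrix (Fin (N - m)) (Fin N) ℝ) (hBp : Bp.rank = N - m)
    (hann : Bp * B = 0)
    (L : Matrix (Fin N ⊕ Fin N) (Fin N ⊕ Fin N) ℝ)
    (R : Matrix (Fin N) (Fin N) ℝ) (S : Matrix (Fin m) (Fin N) ℝ)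
    (ε : ℝ) (hε : 0 < ε)
    (M : Matrix (Fin N ⊕ Fin N) (Fin N ⊕ Fin N) ℝ)
    (hM : M = L * Lᵀ + ε • (1 : Matrix (Fin N ⊕ Fin N) (Fin N ⊕ Fin N) ℝ)) :
    IsUnit (stackRows hm Bp Bᵀ) ∧
    IsUnit (M.toBlocks₁₁ + M.toBlocks₂₂ + R - Rᵀ) ∧
    ∃ K : Matrix (Fin m) (Fin N) ℝ,
      SchurStable ((stackRows hm Bp Bᵀ)⁻¹ *
          stackRows hm
            ((2 : ℝ) • (Bp * ((M.toBlocks₁₁ + M.toBlocks₂₂ + R - Rᵀ)⁻¹ * M.toBlocks₂₁))) S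
        + B * K) := by
  classical
  -- M is positive definite
  have hLH : Lᵀ = Lᴴ := by
    ext i j; simp [Matrix.conjTranspose_apply]
  have hMpd : M.PosDef := by
    rw [hM]
    apply Matrix.PosDef.posSemidef_add
    · rw [hLH]; exact Matrix.posSemidef_self_mul_conjTranspose L
    · rw [Matrix.smul_one_eq_diagonal]
      exact Matrix.posDef_diagonal_iff.mpr fun _ => hε
  have h11 := Stmt13Aux.posDef_toBlocks₁₁ hMpd
  have h22 := Stmt13Aux.posDef_toBlocks₂₂ hMpd
  have hMsym : Mᵀ = M := by
    have h := hMpd.1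
    ext i j
    have := congrFun (congrFun h i) j
    simpa [Matrix.conjTranspose_apply] using this
  have h12 : M.toBlocks₁₂ = M.toBlocks₂₁ᵀ := by
    ext i j
    have := congrFun (congrFun hMsym (Sum.inl i)) (Sum.inr j)
    simpa [Matrix.toBlocks₁₂, Matrix.toBlocks₂₁] using this.symm
  set W := M.toBlocks₁₁ + M.toBlocks₂₂ + R - Rᵀ with hWdef
  -- skew part vanishes on real quadratic forms
  have hskew : ∀ z : Fin N → ℝ, z ⬝ᵥ (R - Rᵀ) *ᵥ z = 0 := by
    intro z
    rw [Matrix.sub_mulVec, dotProduct_sub]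
    have : z ⬝ᵥ Rᵀ *ᵥ z = z ⬝ᵥ R *ᵥ z := by
      rw [Matrix.mulVec_transpose, dotProduct_comm, Matrix.dotProduct_mulVec]
    rw [this, sub_self]
  have hpdsum : (M.toBlocks₁₁ + M.toBlocks₂₂).PosDef := h11.add h22
  -- W is a unit
  have hWu : IsUnit W := by
    apply Matrix.mulVec_injective_iff_isUnit.mp
    intro x y hxy
    by_contra hne
    have hxy0 : x - y ≠ 0 := sub_ne_zero.mpr hne
    have hzero : W *ᵥ (x - y) = 0 := by
      rw [Matrix.mulVec_sub, hxy, sub_self]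
    have hq : (x - y) ⬝ᵥ W *ᵥ (x - y) = 0 := by
      rw [hzero, dotProduct_zero]
    have hWsplit : W = (M.toBlocks₁₁ + M.toBlocks₂₂) + (R - Rᵀ) := by
      rw [hWdef]; abel
    rw [hWsplit, Matrix.add_mulVec, dotProduct_add, hskew, add_zero] at hq
    have hpos : 0 < (x - y) ⬝ᵥ (M.toBlocks₁₁ + M.toBlocks₂₂) *ᵥ (x - y) := by
      simpa using hpdsum.dotProduct_mulVec_pos hxy0
    linarith
  have hPu : IsUnit (stackRows hm Bp Bᵀ) := Stmt13Aux.isUnit_stackRows hm B hB Bp hBp hann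
  refine ⟨hPu, hWu, ?_⟩
  set P := stackRows hm Bp Bᵀ with hPdef
  have hPdetu : IsUnit P.det := (Matrix.isUnit_iff_isUnit_det P).mp hPu
  have hWdetu : IsUnit W.det := (Matrix.isUnit_iff_isUnit_det W).mp hWu
  have hBtB : IsUnit (Bᵀ * B) :=
    Stmt13Aux.isUnit_of_rank_eq _ (by rw [Matrix.rank_transpose_mul_self, hB])
  have hBtBdet : IsUnit (Bᵀ * B).det := (Matrix.isUnit_iff_isUnit_det _).mp hBtB
  set T : Matrix (Fin N) (Fin N) ℝ := (2 : ℝ) • (W⁻¹ * M.toBlocks₂₁) with hTdef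
  refine ⟨(Bᵀ * B)⁻¹ * (Bᵀ * T - S), ?_⟩
  have hA : P⁻¹ * stackRows hm ((2 : ℝ) • (Bp * (W⁻¹ * M.toBlocks₂₁))) S
      + B * ((Bᵀ * B)⁻¹ * (Bᵀ * T - S)) = T := by
    have hc1 : (2 : ℝ) • (Bp * (W⁻¹ * M.toBlocks₂₁)) + Bp * (B * ((Bᵀ * B)⁻¹ * (Bᵀ * T - S)))
        = Bp * T := by
      have hBpBK : Bp * (B * ((Bᵀ * B)⁻¹ * (Bᵀ * T - S))) = 0 := by
        rw [← Matrix.mul_assoc, hann, Matrix.zero_mul]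
      rw [hBpBK, add_zero, hTdef, Matrix.mul_smul]
    have hc2 : S + Bᵀ * (B * ((Bᵀ * B)⁻¹ * (Bᵀ * T - S))) = Bᵀ * T := by
      rw [← Matrix.mul_assoc, ← Matrix.mul_assoc, Matrix.mul_nonsing_inv _ hBtBdet,
        Matrix.one_mul]
      abel
    have hkey : P * (P⁻¹ * stackRows hm ((2 : ℝ) • (Bp * (W⁻¹ * M.toBlocks₂₁))) S
        + B * ((Bᵀ * B)⁻¹ * (Bᵀ * T - S))) = P * T := by
      rw [Matrix.mul_add, ← Matrix.mul_assoc, Matrix.mul_nonsing_inv _ hPdetu, Matrix.one_mul]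
      rw [hPdef, Stmt13Aux.stackRows_mul hm Bp Bᵀ (B * ((Bᵀ * B)⁻¹ * (Bᵀ * T - S))),
        Stmt13Aux.stackRows_mul hm Bp Bᵀ T, Stmt13Aux.stackRows_add, hc1, hc2]
    have hfinal := congrArg (fun Z => P⁻¹ * Z) hkey
    simpa [← Matrix.mul_assoc, Matrix.nonsing_inv_mul _ hPdetu, Matrix.one_mul] using hfinal
  rw [hA]
  intro μ hμ
  obtain ⟨v, hv0, hveig⟩ := Stmt13Aux.exists_eigenvector T hμ
  have hWT : W * T = (2 : ℝ) • M.toBlocks₂₁ := by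
    rw [hTdef, Matrix.mul_smul, ← Matrix.mul_assoc, Matrix.mul_nonsing_inv _ hWdetu,
      Matrix.one_mul]
  have hWTc : (W.map Complex.ofReal) * (T.map Complex.ofReal)
      = (2 : ℂ) • (M.toBlocks₂₁.map Complex.ofReal) := by
    have h1 : (W * T).map Complex.ofReal
        = (W.map Complex.ofReal) * (T.map Complex.ofReal) :=
      _root_.Matrix.map_mul (f := Complex.ofRealHom)
    rw [← h1, hWT]
    ext i j
    simp [Matrix.map_apply]
  have h2 : (2 : ℂ) • ((M.toBlocks₂₁.map Complex.ofReal) *ᵥ v)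
      = μ • ((W.map Complex.ofReal) *ᵥ v) := by
    calc (2 : ℂ) • ((M.toBlocks₂₁.map Complex.ofReal) *ᵥ v)
        = ((2 : ℂ) • (M.toBlocks₂₁.map Complex.ofReal)) *ᵥ v :=
          (Matrix.smul_mulVec _ _ _).symm
      _ = ((W.map Complex.ofReal) * (T.map Complex.ofReal)) *ᵥ v := by rw [hWTc]
      _ = (W.map Complex.ofReal) *ᵥ ((T.map Complex.ofReal) *ᵥ v) := by
          rw [Matrix.mulVec_mulVec]
      _ = (W.map Complex.ofReal) *ᵥ (μ • v) := by rw [hveig]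
      _ = μ • ((W.map Complex.ofReal) *ᵥ v) := Matrix.mulVec_smul _ _ _
  have h3 : 2 * Stmt13Aux.cq M.toBlocks₂₁ v v = μ * Stmt13Aux.cq W v v := by
    have h := congrArg (fun u => star v ⬝ᵥ u) h2
    simpa [Stmt13Aux.cq, dotProduct_smul, smul_eq_mul] using h
  set c := Stmt13Aux.cq M.toBlocks₂₁ v v with hcdef
  set q1 := Stmt13Aux.cq M.toBlocks₁₁ v v with hq1def
  set q2 := Stmt13Aux.cq M.toBlocks₂₂ v v with hq2def
  set qR := Stmt13Aux.cq R v v with hqRdef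
  have hcqW : Stmt13Aux.cq W v v = q1 + q2 + (qR - (starRingEnd ℂ) qR) := by
    rw [hWdef, Stmt13Aux.cq_sub_left, Stmt13Aux.cq_add_left, Stmt13Aux.cq_add_left,
      Stmt13Aux.cq_transpose]
    ring
  have hp1 : 0 < q1.re := Stmt13Aux.re_cq_self_pos h11 hv0
  have hp2 : 0 < q2.re := Stmt13Aux.re_cq_self_pos h22 hv0
  have hrew : (Stmt13Aux.cq W v v).re = q1.re + q2.re := by
    rw [hcqW]
    simp [Complex.add_re, Complex.sub_re, Complex.conj_re]
  have hkey2 : 2 * ‖c‖ < q1.re + q2.re := by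
    by_cases hc0 : c = 0
    · rw [hc0]
      simpa using add_pos hp1 hp2
    · set θ : ℂ := -(c / (‖c‖ : ℂ)) with hθ
      have habs0 : ‖c‖ ≠ 0 := by simpa using hc0
      have habs0' : (‖c‖ : ℂ) ≠ 0 := by exact_mod_cast habs0
      have hcc : (starRingEnd ℂ) c * c
          = (‖c‖ : ℂ) * (‖c‖ : ℂ) := by
        rw [mul_comm, Complex.mul_conj]
        norm_cast
        rw [← Complex.sq_norm]
        ring
      have hθc : (starRingEnd ℂ) θ * c = -(‖c‖ : ℂ) := by
        rw [hθ]
        simp only [map_neg, map_div₀, Complex.conj_ofReal]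
        field_simp
        linear_combination (-1 : ℂ) * hcc
      have hθc' : θ * (starRingEnd ℂ) c = -(‖c‖ : ℂ) := by
        have h := congrArg (starRingEnd ℂ) hθc
        simpa [Complex.conj_conj, Complex.conj_ofReal, mul_comm] using h
      have hθθ : (starRingEnd ℂ) θ * θ = 1 := by
        rw [hθ]
        simp only [map_neg, map_div₀, Complex.conj_ofReal]
        field_simp
        linear_combination hcc
      have hz0 : (Sum.elim v (θ • v) : (Fin N ⊕ Fin N) → ℂ) ≠ 0 :=
        fun h => hv0 (funext fun i => congrFun h (Sum.inl i))
      have hpos := Stmt13Aux.re_cq_self_pos hMpd hz0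
      rw [Stmt13Aux.cq_block] at hpos
      simp only [Stmt13Aux.cq_smul_left, Stmt13Aux.cq_smul_right] at hpos
      have h12c : Stmt13Aux.cq M.toBlocks₁₂ v v = (starRingEnd ℂ) c := by
        rw [h12, Stmt13Aux.cq_transpose]
      have hθθ' : θ * (starRingEnd ℂ) θ = 1 := by rw [mul_comm]; exact hθθ
      rw [h12c, hθc', hθc, ← mul_assoc θ ((starRingEnd ℂ) θ), hθθ', one_mul, ← hq1def, ← hq2def] at hpos
      simp only [Complex.add_re, Complex.neg_re, Complex.ofReal_re] at hpos
      linarith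
  have habsw : q1.re + q2.re ≤ ‖(Stmt13Aux.cq W v v)‖ := by
    rw [← hrew]
    exact (le_abs_self _).trans (Complex.abs_re_le_norm _)
  have habsmu : ‖μ‖ * ‖(Stmt13Aux.cq W v v)‖ = 2 * ‖c‖ := by
    have h := congrArg norm h3
    rw [norm_mul, norm_mul, Complex.norm_two] at h
    exact h.symm
  have hwpos : 0 < ‖(Stmt13Aux.cq W v v)‖ := lt_of_lt_of_le (add_pos hp1 hp2) habsw
  have hlt : ‖μ‖ * ‖(Stmt13Aux.cq W v v)‖
      < 1 * ‖(Stmt13Aux.cq W v v)‖ := by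
    rw [one_mul]
    calc ‖μ‖ * ‖(Stmt13Aux.cq W v v)‖ = 2 * ‖c‖ := habsmu
      _ < q1.re + q2.re := hkey2
      _ ≤ ‖(Stmt13Aux.cq W v v)‖ := habsw
  exact lt_of_mul_lt_mul_right hlt hwpos.le
end

section
/- Let B ∈ ℝ^{N×m} with rank(B) = m, let B⊥ ∈ ℝ^{(N−m)×N} be a full-row-rank matrix with B⊥ B = 0, and let A ∈ ℝ^{N×N} be such that the pair (A, B) is stabilizable. Then there exist L ∈ ℝ^{2N×2N}, R ∈ ℝ^{N×N}, S ∈ ℝ^{m×N}, and ε > 0 such that, with M := L Lᵀ + ε I partitioned into N×N blocks M₁₁, M₁₂, M₂₁, M₂₂, the matrix M₁₁ + M₂₂ + R − Rᵀ is invertible and A = [B⊥; Bᵀ]⁻¹ · [2 B⊥ (M₁₁ + M₂₂ + R − Rᵀ)⁻¹ M₂₁; S]. -/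
open Matrix

/-- Existence of a solution to the discrete Lyapunov equation. -/
lemma exists_lyap {N : ℕ} (hN : 0 < N) (Φ : Matrix (Fin N) (Fin N) ℝ)
    (hΦ : SchurStable Φ) :
    ∃ W : Matrix (Fin N) (Fin N) ℝ, W.PosSemidef ∧ Φᵀ * W * Φ = W - 1 := by
  classical
  haveI : Nonempty (Fin N) := ⟨⟨0, hN⟩⟩
  letI : NormedRing (Matrix (Fin N) (Fin N) ℝ) := Matrix.linftyOpNormedRing
  letI : NormedAlgebra ℝ (Matrix (Fin N) (Fin N) ℝ) := Matrix.linftyOpNormedAlgebra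
  letI : NormedRing (Matrix (Fin N) (Fin N) ℂ) := Matrix.linftyOpNormedRing
  letI : NormedAlgebra ℂ (Matrix (Fin N) (Fin N) ℂ) := Matrix.linftyOpNormedAlgebra
  haveI : CompleteSpace (Matrix (Fin N) (Fin N) ℝ) := FiniteDimensional.complete ℝ _
  haveI : CompleteSpace (Matrix (Fin N) (Fin N) ℂ) := FiniteDimensional.complete ℂ _
  set Φc : Matrix (Fin N) (Fin N) ℂ := Φ.map Complex.ofReal with hΦc
  -- spectral radius < 1
  have hρ : spectralRadius ℂ Φc < 1 := by
    have h := spectrum.spectralRadius_lt_of_forall_lt (a := Φc) (r := 1)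
      (fun z hz => by
        have h1 : ‖z‖ < 1 := hΦ z hz
        rw [← NNReal.coe_lt_coe]
        simpa [Complex.norm_def] using h1)
    simpa using h
  obtain ⟨r, hρr, hr1⟩ := ENNReal.lt_iff_exists_nnreal_btwn.mp hρ
  have hr1' : r < 1 := by exact_mod_cast hr1
  have hgel := spectrum.pow_nnnorm_pow_one_div_tendsto_nhds_spectralRadius Φc
  have hev : ∀ᶠ n : ℕ in Filter.atTop,
      (‖Φc ^ n‖₊ : ENNReal) ^ (1 / (n : ℝ)) < (r : ENNReal) :=
    hgel.eventually_lt_const hρr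
  have hev2 : ∀ᶠ n : ℕ in Filter.atTop, ‖Φc ^ n‖₊ ≤ r ^ n := by
    filter_upwards [hev, Filter.eventually_ge_atTop 1] with n hn hn1
    have hn0 : (n : ℝ) ≠ 0 := by positivity
    have h2 := ENNReal.rpow_lt_rpow hn (by positivity : (0:ℝ) < (n:ℝ))
    rw [← ENNReal.rpow_mul, one_div, inv_mul_cancel₀ hn0, ENNReal.rpow_one,
      ENNReal.rpow_natCast, ← ENNReal.coe_pow, ENNReal.coe_lt_coe] at h2
    exact h2.le
  -- transfer norms to the real side
  have hmapnorm : ∀ (X : Matrix (Fin N) (Fin N) ℝ), ‖X.map Complex.ofReal‖₊ = ‖X‖₊ := by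
    intro X
    rw [Matrix.linfty_opNNNorm_def, Matrix.linfty_opNNNorm_def]
    congr 1
    funext i
    exact Finset.sum_congr rfl fun j _ => Complex.nnnorm_real _
  have hpowmap : ∀ n : ℕ, Φc ^ n = (Φ ^ n).map Complex.ofReal := by
    intro n
    have : Φc = Complex.ofRealHom.mapMatrix Φ := rfl
    rw [this, ← map_pow]
    rfl
  have hev3 : ∀ᶠ n : ℕ in Filter.atTop, ‖Φ ^ n‖₊ ≤ r ^ n := by
    filter_upwards [hev2] with n hn
    rwa [hpowmap n, hmapnorm] at hn
  -- entrywise and transpose norm bounds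
  have hentry : ∀ (X : Matrix (Fin N) (Fin N) ℝ) (i j : Fin N), ‖X i j‖₊ ≤ ‖X‖₊ := by
    intro X i j
    rw [Matrix.linfty_opNNNorm_def]
    exact le_trans
      (Finset.single_le_sum (f := fun j => ‖X i j‖₊) (fun _ _ => zero_le) (Finset.mem_univ j))
      (Finset.le_sup (f := fun i => ∑ j : Fin N, ‖X i j‖₊) (Finset.mem_univ i))
  have htransp : ∀ X : Matrix (Fin N) (Fin N) ℝ, ‖Xᵀ‖₊ ≤ (N : NNReal) * ‖X‖₊ := by
    intro X
    rw [Matrix.linfty_opNNNorm_def]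
    refine Finset.sup_le fun i _ => ?_
    calc ∑ j, ‖Xᵀ i j‖₊ ≤ ∑ _j : Fin N, ‖X‖₊ :=
          Finset.sum_le_sum (fun j _ => hentry X j i)
      _ = (N : NNReal) * ‖X‖₊ := by
          simp [Finset.sum_const, Finset.card_univ]
  -- summability
  have hsummable : Summable (fun k : ℕ => (Φ ^ k)ᵀ * (Φ ^ k)) := by
    apply Summable.of_norm_bounded_eventually_nat
      (g := fun k : ℕ => (N : ℝ) * (((r : ℝ)) ^ 2) ^ k)
    · have hrR : (r : ℝ) < 1 := by exact_mod_cast hr1'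
      have h0 : (0:ℝ) ≤ (r : ℝ) := r.coe_nonneg
      exact (summable_geometric_of_lt_one (by positivity)
        (by nlinarith)).mul_left _
    · filter_upwards [hev3] with n hn
      have h1 : ‖(Φ ^ n)ᵀ * (Φ ^ n)‖₊ ≤ ((N : NNReal) * (r ^ n)) * (r ^ n) :=
        le_trans (Matrix.linfty_opNNNorm_mul _ _)
          (mul_le_mul' (le_trans (htransp _) (mul_le_mul' le_rfl hn)) hn)
      have h2 := NNReal.coe_le_coe.mpr h1
      rw [← coe_nnnorm]
      push_cast at h2 ⊢
      calc (‖(Φ ^ n)ᵀ * Φ ^ n‖₊ : ℝ) ≤ (N : ℝ) * (r:ℝ) ^ n * (r:ℝ) ^ n := h2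
        _ = (N : ℝ) * ((r:ℝ) ^ 2) ^ n := by ring
  set f : ℕ → Matrix (Fin N) (Fin N) ℝ := fun k => (Φ ^ k)ᵀ * (Φ ^ k) with hf
  set W : Matrix (Fin N) (Fin N) ℝ := ∑' k, f k with hW
  have hHasSum : HasSum f W := hsummable.hasSum
  -- the map X ↦ Φᵀ * X * Φ
  let g : Matrix (Fin N) (Fin N) ℝ →ₗ[ℝ] Matrix (Fin N) (Fin N) ℝ :=
    { toFun := fun X => Φᵀ * X * Φ
      map_add' := fun X Y => by noncomm_ring
      map_smul' := fun c X => by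
        simp [Matrix.mul_smul, Matrix.smul_mul] }
  have hgsum : HasSum (fun k => g (f k)) (g W) :=
    hHasSum.map g.toAddMonoidHom g.continuous_of_finiteDimensional
  have hshift : ∀ k : ℕ, g (f k) = f (k + 1) := by
    intro k
    show Φᵀ * ((Φ ^ k)ᵀ * (Φ ^ k)) * Φ = (Φ ^ (k+1))ᵀ * (Φ ^ (k+1))
    rw [pow_succ, Matrix.transpose_mul]
    noncomm_ring
  rw [funext hshift] at hgsum
  have h4 : HasSum f (g W + ∑ i ∈ Finset.range 1, f i) := (hasSum_nat_add_iff 1).mp hgsum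
  have h5 : W = g W + 1 := by
    have := hHasSum.unique h4
    simpa [hf] using this
  refine ⟨W, Matrix.posSemidef_iff_dotProduct_mulVec.mpr ⟨?_, ?_⟩, ?_⟩
  · -- Hermitian
    have hWT : HasSum (fun k => (f k)ᵀ) Wᵀ := by
      let T : Matrix (Fin N) (Fin N) ℝ →ₗ[ℝ] Matrix (Fin N) (Fin N) ℝ :=
        { toFun := fun X => Xᵀ
          map_add' := fun X Y => Matrix.transpose_add X Y
          map_smul' := fun c X => Matrix.transpose_smul c X }
      exact hHasSum.map T.toAddMonoidHom T.continuous_of_finiteDimensional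
    have hft : ∀ k, (f k)ᵀ = f k := by
      intro k
      show ((Φ ^ k)ᵀ * (Φ ^ k))ᵀ = _
      rw [Matrix.transpose_mul, Matrix.transpose_transpose]
    rw [funext hft] at hWT
    have h6 : Wᵀ = W := hWT.unique hHasSum
    show Wᴴ = W
    have : Wᴴ = Wᵀ := by
      ext i j
      simp [Matrix.conjTranspose_apply, Matrix.transpose_apply]
    rw [this, h6]
  · -- PosSemidef inequality
    intro x
    let q : Matrix (Fin N) (Fin N) ℝ →ₗ[ℝ] ℝ :=
      { toFun := fun X => x ⬝ᵥ (X *ᵥ x)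
        map_add' := fun X Y => by
          simp [Matrix.add_mulVec, dotProduct_add]
        map_smul' := fun c X => by
          simp [Matrix.smul_mulVec, dotProduct_smul, smul_eq_mul] }
    have hqsum : HasSum (fun k => q (f k)) (q W) :=
      hHasSum.map q.toAddMonoidHom q.continuous_of_finiteDimensional
    have hterm : ∀ k, 0 ≤ q (f k) := by
      intro k
      show 0 ≤ x ⬝ᵥ (((Φ ^ k)ᵀ * (Φ ^ k)) *ᵥ x)
      rw [← Matrix.mulVec_mulVec, Matrix.dotProduct_mulVec, Matrix.vecMul_transpose]
      exact Finset.sum_nonneg fun i _ => mul_self_nonneg _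
    have := hasSum_le hterm hasSum_zero hqsum
    have h' : 0 ≤ x ⬝ᵥ (W *ᵥ x) := this
    simpa [star_trivial] using h'
  · -- Lyapunov identity
    exact eq_sub_of_add_eq h5.symm

lemma stackRows_mul {N m : ℕ} (h : m ≤ N)
    (X : Matrix (Fin (N - m)) (Fin N) ℝ) (Y : Matrix (Fin m) (Fin N) ℝ)
    (A : Matrix (Fin N) (Fin N) ℝ) :
    stackRows h X Y * A = stackRows h (X * A) (Y * A) := by
  rw [stackRows, stackRows, ← Matrix.fromRows_mul]
  rfl

lemma isUnit_stack {N m : ℕ} (hm : m ≤ N)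
    (B : Matrix (Fin N) (Fin m) ℝ) (hB : B.rank = m)
    (Bp : Matrix (Fin (N - m)) (Fin N) ℝ) (hBp : Bp.rank = N - m)
    (hann : Bp * B = 0) :
    IsUnit (stackRows hm Bp Bᵀ) := by
  rw [← Matrix.vecMul_surjective_iff_isUnit]
  have hrange : Set.range (stackRows hm Bp Bᵀ) = Set.range Bp ∪ Set.range Bᵀ := by
    have h1 : Set.range (stackRows hm Bp Bᵀ)
        = Set.range ((Matrix.fromRows Bp Bᵀ) ∘
          ((finCongr (Nat.sub_add_cancel hm).symm).trans finSumFinEquiv.symm)) := rfl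
    rw [h1, Function.Surjective.range_comp (Equiv.surjective _) (Matrix.fromRows Bp Bᵀ)]
    have h2 : Set.range (Matrix.fromRows Bp Bᵀ) = Set.range (Sum.elim Bp Bᵀ) := rfl
    rw [h2]; exact Set.Sum.elim_range ..
  have hspan : Submodule.span ℝ (Set.range (stackRows hm Bp Bᵀ)) = ⊤ := by
    rw [hrange, Submodule.span_union]
    set s := Submodule.span ℝ (Set.range Bp) with hs_def
    set t := Submodule.span ℝ (Set.range Bᵀ) with ht_def
    have hs : Module.finrank ℝ s = N - m := by
      rw [hs_def, show Set.range Bp = Set.range Bp.row from rfl, ← Matrix.rank_eq_finrank_span_row, hBp]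
    have ht : Module.finrank ℝ t = m := by
      rw [ht_def, show Set.range Bᵀ = Set.range Bᵀ.row from rfl, ← Matrix.rank_eq_finrank_span_row, Matrix.rank_transpose, hB]
    have hdisj : Disjoint s t := by
      rw [Submodule.disjoint_def]
      intro v hvs hvt
      rw [hs_def, show Set.range Bp = Set.range Bp.row from rfl, ← range_vecMulLinear] at hvs
      rw [ht_def, show Set.range Bᵀ = Set.range Bᵀ.row from rfl, ← range_vecMulLinear] at hvt
      obtain ⟨x, hx⟩ := hvs
      obtain ⟨u, hu⟩ := hvt
      rw [Matrix.vecMulLinear_apply] at hx hu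
      have hu' : B *ᵥ u = v := by rw [← hu, Matrix.vecMul_transpose]
      have hdot : v ⬝ᵥ v = 0 := by
        have h9 : v ⬝ᵥ v = (x ᵥ* Bp) ⬝ᵥ (B *ᵥ u) := by rw [hx, hu']
        rw [h9, Matrix.dotProduct_mulVec, Matrix.vecMul_vecMul, hann,
          Matrix.vecMul_zero, zero_dotProduct]
      exact dotProduct_self_eq_zero.mp hdot
    apply Submodule.eq_top_of_finrank_eq
    have hsum := Submodule.finrank_sup_add_finrank_inf_eq s t
    rw [disjoint_iff.mp hdisj, finrank_bot, add_zero] at hsum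
    rw [hsum, hs, ht, Module.finrank_pi, Fintype.card_fin]
    omega
  have : LinearMap.range (stackRows hm Bp Bᵀ).vecMulLinear = ⊤ := by
    rw [range_vecMulLinear]; exact hspan
  intro v
  obtain ⟨x, hx⟩ := LinearMap.range_eq_top.mp this v
  exact ⟨x, hx⟩

lemma aux_exists_eps {n : Type*} [Fintype n] [DecidableEq n] [Nonempty n]
    {M : Matrix n n ℝ} (hM : M.PosDef) :
    ∃ ε : ℝ, 0 < ε ∧ (M - ε • 1).PosSemidef := by
  have hH : M.IsHermitian := hM.isHermitian
  refine ⟨Finset.univ.inf' Finset.univ_nonempty hH.eigenvalues, ?_, ?_⟩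
  · rw [Finset.lt_inf'_iff]
    exact fun i _ => hM.eigenvalues_pos i
  · set ε := Finset.univ.inf' Finset.univ_nonempty hH.eigenvalues with hε
    set U : Matrix n n ℝ := (hH.eigenvectorUnitary : Matrix n n ℝ) with hU
    have key : M - ε • 1 = U * diagonal (fun i => hH.eigenvalues i - ε) * star U := by
      have h1 : (diagonal (fun i : n => hH.eigenvalues i - ε) : Matrix n n ℝ)
          = diagonal (RCLike.ofReal ∘ hH.eigenvalues) - ε • 1 := by
        rw [smul_one_eq_diagonal, ← diagonal_sub]
        congr 1
      have h2 : U * (ε • (1 : Matrix n n ℝ)) * star U = ε • 1 := by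
        rw [mul_smul_comm, mul_one, smul_mul_assoc,
          Matrix.mem_unitaryGroup_iff.mp (hH.eigenvectorUnitary).2]
      rw [h1, Matrix.mul_sub, Matrix.sub_mul, h2]
      congr 1
      exact hH.spectral_theorem
    rw [key, Matrix.star_eq_conjTranspose]
    exact Matrix.PosSemidef.mul_mul_conjTranspose_same
      (Matrix.PosSemidef.diagonal (fun i => sub_nonneg.mpr
        (Finset.inf'_le _ (Finset.mem_univ i)))) U

lemma conj_eq_transpose {n : Type*} [Fintype n] (X : Matrix n n ℝ) : Xᴴ = Xᵀ := by
  ext i j; simp [Matrix.conjTranspose_apply]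

lemma star_vec_eq {n : Type*} (x : n → ℝ) : star x = x := by funext i; simp

lemma dotProduct_self_pos {n : Type*} [Fintype n] {x : n → ℝ} (hx : x ≠ 0) :
    0 < x ⬝ᵥ x := by
  rcases lt_or_eq_of_le (Finset.sum_nonneg fun i _ => mul_self_nonneg (x i)) with h | h
  · exact h
  · exact absurd (dotProduct_self_eq_zero.mp h.symm) hx

lemma blockPD {N : ℕ} (Φ W : Matrix (Fin N) (Fin N) ℝ)
    (hWpsd : W.PosSemidef) (hWT : Wᵀ = W) (hWid : Φᵀ * W * Φ = W - 1)
    (hWpd : W.PosDef) :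
    (Matrix.fromBlocks W (Φᵀ * W) (W * Φ) W).PosDef := by
  rw [Matrix.posDef_iff_dotProduct_mulVec]
  constructor
  · show _ᴴ = _
    rw [conj_eq_transpose, Matrix.fromBlocks_transpose, Matrix.transpose_mul,
      Matrix.transpose_mul, Matrix.transpose_transpose, hWT]
  · intro x hx
    set x₁ : Fin N → ℝ := x ∘ Sum.inl with hx₁
    set x₂ : Fin N → ℝ := x ∘ Sum.inr with hx₂
    have hxe : x = Sum.elim x₁ x₂ := by funext i; cases i <;> rfl
    rw [star_vec_eq, hxe]
    rw [Matrix.fromBlocks_mulVec, sumElim_dotProduct_sumElim]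
    simp only [Sum.elim_comp_inl, Sum.elim_comp_inr]
    set y : Fin N → ℝ := Φ *ᵥ x₁ with hy
    have hvm : x₂ ᵥ* W = W *ᵥ x₂ := by
      conv_lhs => rw [← hWT]
      rw [Matrix.vecMul_transpose]
    have e1 : x₁ ⬝ᵥ ((Φᵀ * W) *ᵥ x₂) = y ⬝ᵥ (W *ᵥ x₂) := by
      rw [← Matrix.mulVec_mulVec, Matrix.dotProduct_mulVec, Matrix.vecMul_transpose]
    have e3 : (W * Φ) *ᵥ x₁ = W *ᵥ y := by rw [hy, Matrix.mulVec_mulVec]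
    have e4 : x₂ ⬝ᵥ (W *ᵥ y) = y ⬝ᵥ (W *ᵥ x₂) := by
      rw [Matrix.dotProduct_mulVec, hvm, dotProduct_comm]
    have e5 : y ⬝ᵥ (W *ᵥ y) = x₁ ⬝ᵥ (W *ᵥ x₁) - x₁ ⬝ᵥ x₁ := by
      have h2 : x₁ ⬝ᵥ ((Φᵀ * W * Φ) *ᵥ x₁) = x₁ ⬝ᵥ ((W - 1) *ᵥ x₁) := by rw [hWid]
      rw [Matrix.sub_mulVec, dotProduct_sub, Matrix.one_mulVec] at h2
      have e5a : x₁ ⬝ᵥ ((Φᵀ * W * Φ) *ᵥ x₁) = y ⬝ᵥ (W *ᵥ y) := by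
        conv_lhs =>
          rw [show (Φᵀ * W * Φ) *ᵥ x₁ = Φᵀ *ᵥ (W *ᵥ y) from by
            rw [hy, Matrix.mulVec_mulVec, Matrix.mulVec_mulVec, mul_assoc],
            Matrix.dotProduct_mulVec, Matrix.vecMul_transpose]
      rw [← e5a, h2]
    have e6 : 0 ≤ (x₂ + y) ⬝ᵥ (W *ᵥ (x₂ + y)) := by
      have := (Matrix.posSemidef_iff_dotProduct_mulVec.mp hWpsd).2 (x₂ + y)
      rwa [star_vec_eq] at this
    rw [Matrix.mulVec_add, dotProduct_add, add_dotProduct, add_dotProduct] at e6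
    simp only [dotProduct_add]
    rw [e1, e3, e4]
    -- goal : 0 < x₁ ⬝ᵥ W *ᵥ x₁ + y ⬝ᵥ W *ᵥ x₂ + (y ⬝ᵥ W *ᵥ x₂ + x₂ ⬝ᵥ W *ᵥ x₂)
    by_cases h0 : x₁ = 0
    · have hx2 : x₂ ≠ 0 := by
        intro h2'
        exact hx (by rw [hxe, h0, h2']; funext i; cases i <;> rfl)
      have hb : 0 < x₂ ⬝ᵥ (W *ᵥ x₂) := by
        have := (Matrix.posDef_iff_dotProduct_mulVec.mp hWpd).2 hx2
        rwa [star_vec_eq] at this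
      have hy0 : y = 0 := by rw [hy, h0, Matrix.mulVec_zero]
      simp only [h0, hy0, zero_dotProduct, dotProduct_zero, zero_add,
        Matrix.mulVec_zero]
      simpa using hb
    · have hn1 : 0 < x₁ ⬝ᵥ x₁ := dotProduct_self_pos h0
      have he4' : x₂ ⬝ᵥ (W *ᵥ y) = y ⬝ᵥ (W *ᵥ x₂) := e4
      linarith [e6, e5, hn1]

open scoped MatrixOrder in
lemma exists_sqrt_aux {n : Type*} [Fintype n] [DecidableEq n] {M : Matrix n n ℝ}
    (hM : M.PosSemidef) : ∃ L : Matrix n n ℝ, Lᵀ = L ∧ L * L = M :=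
  ⟨CFC.sqrt M, by
    rw [← conj_eq_transpose]; exact (Matrix.nonneg_iff_posSemidef.mp (CFC.sqrt_nonneg M)).1,
    CFC.sqrt_mul_sqrt_self M hM.nonneg⟩

theorem stmt14 {N m : ℕ} (hm : m ≤ N)
    (B : Matrix (Fin N) (Fin m) ℝ) (hB : B.rank = m)
    (Bp : Matrix (Fin (N - m)) (Fin N) ℝ) (hBp : Bp.rank = N - m)
    (hann : Bp * B = 0)
    (A : Matrix (Fin N) (Fin N) ℝ)
    (hstab : ∃ K : Matrix (Fin m) (Fin N) ℝ, SchurStable (A + B * K)) :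
    ∃ (L : Matrix (Fin N ⊕ Fin N) (Fin N ⊕ Fin N) ℝ)
      (R : Matrix (Fin N) (Fin N) ℝ) (S : Matrix (Fin m) (Fin N) ℝ) (ε : ℝ), 0 < ε ∧
      ∀ M : Matrix (Fin N ⊕ Fin N) (Fin N ⊕ Fin N) ℝ,
        M = L * Lᵀ + ε • (1 : Matrix (Fin N ⊕ Fin N) (Fin N ⊕ Fin N) ℝ) →
        IsUnit (M.toBlocks₁₁ + M.toBlocks₂₂ + R - Rᵀ) ∧
        A = (stackRows hm Bp Bᵀ)⁻¹ *
          stackRows hm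
            ((2 : ℝ) • (Bp * ((M.toBlocks₁₁ + M.toBlocks₂₂ + R - Rᵀ)⁻¹ * M.toBlocks₂₁))) S := by
  obtain ⟨K, hK⟩ := hstab
  rcases Nat.eq_zero_or_pos N with hN0 | hN
  · subst hN0
    refine ⟨0, 0, 0, 1, one_pos, fun M hM => ⟨?_, Subsingleton.elim _ _⟩⟩
    rw [Matrix.isUnit_iff_isUnit_det, Matrix.det_isEmpty]
    exact isUnit_one
  · haveI : Nonempty (Fin N) := ⟨⟨0, hN⟩⟩
    obtain ⟨W, hWpsd, hWid⟩ := exists_lyap hN (A + B * K) hK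
    set Φ : Matrix (Fin N) (Fin N) ℝ := A + B * K with hΦdef
    have hWT : Wᵀ = W := by rw [← conj_eq_transpose]; exact hWpsd.1
    have hWpd : W.PosDef := by
      refine Matrix.posDef_iff_dotProduct_mulVec.mpr ⟨hWpsd.1, fun x hx => ?_⟩
      rw [star_vec_eq]
      have h2 : x ⬝ᵥ ((Φᵀ * W * Φ) *ᵥ x) = x ⬝ᵥ ((W - 1) *ᵥ x) := by rw [hWid]
      rw [Matrix.sub_mulVec, dotProduct_sub, Matrix.one_mulVec] at h2
      have h3 : x ⬝ᵥ ((Φᵀ * W * Φ) *ᵥ x) = (Φ *ᵥ x) ⬝ᵥ (W *ᵥ (Φ *ᵥ x)) := by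
        conv_lhs =>
          rw [show (Φᵀ * W * Φ) *ᵥ x = Φᵀ *ᵥ (W *ᵥ (Φ *ᵥ x)) from by
              rw [Matrix.mulVec_mulVec, Matrix.mulVec_mulVec, mul_assoc],
            Matrix.dotProduct_mulVec, Matrix.vecMul_transpose]
      have h4 : 0 ≤ (Φ *ᵥ x) ⬝ᵥ (W *ᵥ (Φ *ᵥ x)) := by
        have := (Matrix.posSemidef_iff_dotProduct_mulVec.mp hWpsd).2 (Φ *ᵥ x); rwa [star_vec_eq] at this
      have h5 : 0 < x ⬝ᵥ x := dotProduct_self_pos hx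
      linarith [h3 ▸ h2]
    have hM0pd := blockPD Φ W hWpsd hWT hWid hWpd
    obtain ⟨ε, hεpos, hpsd⟩ := aux_exists_eps hM0pd
    obtain ⟨Lsq, hLsymm, hLmul⟩ := exists_sqrt_aux hpsd
    have hLL : Lsq * Lsqᵀ + ε • 1 = Matrix.fromBlocks W (Φᵀ * W) (W * Φ) W := by
      rw [hLsymm, hLmul]; exact sub_add_cancel _ _
    have hF := isUnit_stack hm B hB Bp hBp hann
    haveI : Invertible (stackRows hm Bp Bᵀ) :=
      (stackRows hm Bp Bᵀ).invertibleOfIsUnitDet ((Matrix.isUnit_iff_isUnit_det _).mp hF)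
    refine ⟨Lsq, 0, Bᵀ * A, ε, hεpos, ?_⟩
    rintro M rfl
    rw [hLL]
    simp only [Matrix.toBlocks_fromBlocks₁₁, Matrix.toBlocks_fromBlocks₂₂,
      Matrix.toBlocks_fromBlocks₂₁, Matrix.transpose_zero, add_zero, sub_zero]
    have hGpd : (W + W).PosDef := hWpd.add hWpd
    have hGunit : IsUnit (W + W) := hGpd.isUnit
    haveI : Invertible (W + W) :=
      (W + W).invertibleOfIsUnitDet ((Matrix.isUnit_iff_isUnit_det _).mp hGunit)
    refine ⟨hGunit, ?_⟩
    have hGmul : (W + W) * ((2:ℝ)⁻¹ • Φ) = W * Φ := by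
      rw [Matrix.mul_smul, Matrix.add_mul, ← two_smul ℝ (W * Φ), smul_smul,
        inv_mul_cancel₀ (two_ne_zero), one_smul]
    have hInv : (W + W)⁻¹ * (W * Φ) = (2:ℝ)⁻¹ • Φ := by
      rw [← hGmul, Matrix.inv_mul_cancel_left_of_invertible]
    have h2B : (2 : ℝ) • (Bp * ((2:ℝ)⁻¹ • Φ)) = Bp * Φ := by
      rw [Matrix.mul_smul, smul_smul]; norm_num
    have hBpΦ : Bp * Φ = Bp * A := by
      rw [hΦdef, Matrix.mul_add, ← Matrix.mul_assoc, hann, Matrix.zero_mul, add_zero]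
    rw [hInv, h2B, hBpΦ, ← stackRows_mul, Matrix.inv_mul_cancel_left_of_invertible]
end
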